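/- arXiv:1807.11778 — 7 statements merged into one kernel-verified Lean document; each statement's English description precedes it below -/
import Mathlib

section
/- Let d ≥ 1 be an integer, δ > 0, and let a : (0,∞) → ℝ satisfy a(t) = o(t) as t → ∞, and set R(t) = δt + a(t). Then, as t → ∞, ∫_{{y ∈ ℝ^d : |y| ≥ R(t)}} (2πt)^{-d/2} exp(−|y|²/(2t)) dy ∼ (ω_d/(2π)^{d/2}) · e^{−R(t)²/(2t)} · (R(t)/√t)^{d−2}, i.e., the ratio of the two sides tends to 1. -/
open Real MeasureTheory Filter Set

namespace GaussTail


noncomputable def fpow (d : ℕ) : ℝ → ℝ := fun s => s ^ (d - 1) * Real.exp (-s ^ 2 / 2)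
noncomputable def G (d : ℕ) : ℝ → ℝ := fun x => ∫ s in Ioi x, fpow d s
noncomputable def D (d : ℕ) : ℝ → ℝ := fun x => x ^ ((d : ℝ) - 2) * Real.exp (-x ^ 2 / 2)

lemma fpow_cont (d : ℕ) : Continuous (fpow d) := by
  unfold fpow; fun_prop

lemma fpow_integrableOn (d : ℕ) : IntegrableOn (fpow d) (Ioi 0) := by
  have h := integrableOn_rpow_mul_exp_neg_mul_sq (b := (1/2 : ℝ)) (by norm_num)
      (s := ((d - 1 : ℕ) : ℝ)) (lt_of_lt_of_le (by norm_num) (Nat.cast_nonneg _))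
  refine h.congr_fun (fun x hx => ?_) measurableSet_Ioi
  beta_reduce
  rw [Real.rpow_natCast]
  unfold fpow
  rw [show -(1/2:ℝ)*x^2 = -x^2/2 by ring]

lemma G_eq (d : ℕ) {y : ℝ} (hy : 0 < y) :
    G d y = (∫ s in Ioi (0:ℝ), fpow d s) - ∫ s in (0:ℝ)..y, fpow d s := by
  have hsplit : Ioc (0:ℝ) y ∪ Ioi y = Ioi 0 := Ioc_union_Ioi_eq_Ioi hy.le
  have h1 : (∫ s in Ioc (0:ℝ) y, fpow d s) + ∫ s in Ioi y, fpow d s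
      = ∫ s in Ioi (0:ℝ), fpow d s := by
    rw [← setIntegral_union (Ioc_disjoint_Ioi le_rfl) measurableSet_Ioi
      ((fpow_integrableOn d).mono_set Ioc_subset_Ioi_self)
      ((fpow_integrableOn d).mono_set (Ioi_subset_Ioi hy.le)), hsplit]
  rw [intervalIntegral.integral_of_le hy.le]
  unfold G
  linarith

lemma hasDerivAt_G (d : ℕ) {x : ℝ} (hx : 0 < x) : HasDerivAt (G d) (-(fpow d x)) x := by
  have hInt : IntervalIntegrable (fpow d) volume 0 x :=
    (fpow_cont d).intervalIntegrable _ _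
  have hder : HasDerivAt (fun y => (∫ s in Ioi (0:ℝ), fpow d s) - ∫ s in (0:ℝ)..y, fpow d s)
      (-(fpow d x)) x :=
    (intervalIntegral.integral_hasDerivAt_right hInt
      ((fpow_cont d).stronglyMeasurableAtFilter _ _) (fpow_cont d).continuousAt).const_sub _
  refine hder.congr_of_eventuallyEq ?_
  filter_upwards [isOpen_Ioi.mem_nhds hx] with y hy
  exact G_eq d hy

lemma G_tendsto (d : ℕ) : Tendsto (G d) atTop (nhds 0) := by
  have h := intervalIntegral_tendsto_integral_Ioi 0 (fpow_integrableOn d) tendsto_id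
  have h2 : Tendsto (fun y => (∫ s in Ioi (0:ℝ), fpow d s) - ∫ s in (0:ℝ)..y, fpow d s)
      atTop (nhds ((∫ s in Ioi (0:ℝ), fpow d s) - ∫ s in Ioi (0:ℝ), fpow d s)) :=
    tendsto_const_nhds.sub h
  rw [sub_self] at h2
  refine h2.congr' ?_
  filter_upwards [eventually_gt_atTop 0] with y hy
  exact (G_eq d hy).symm

lemma D_tendsto (d : ℕ) : Tendsto (D d) atTop (nhds 0) := by
  have h := (tendsto_rpow_mul_exp_neg_mul_atTop_nhds_zero (((d:ℝ)-2)/2) (1/2) (by norm_num)).comp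
    (tendsto_pow_atTop (n := 2) two_ne_zero)
  refine h.congr' ?_
  filter_upwards [eventually_gt_atTop 0] with x hx
  show (x ^ 2 : ℝ) ^ (((d:ℝ)-2)/2) * Real.exp (-(1/2) * x ^ 2) = D d x
  unfold D
  rw [← Real.rpow_natCast x 2, ← Real.rpow_mul hx.le]
  norm_num
  rw [show (2:ℝ) * (((d:ℝ)-2)/2) = (d:ℝ)-2 by ring, show -(1/2 * x^2 : ℝ) = -x^2/2 by ring]

lemma key (d : ℕ) (hd : 1 ≤ d) :
    Tendsto (fun x => G d x / D d x) atTop (nhds 1) := by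
  set c : ℝ := (d : ℝ) - 2 with hc
  have hD' : ∀ x : ℝ, 0 < x → HasDerivAt (D d)
      ((x ^ ((d:ℝ) - 3) * (c - x ^ 2)) * Real.exp (-x ^ 2 / 2)) x := by
    intro x hx
    have h1 : HasDerivAt (fun x : ℝ => x ^ ((d:ℝ) - 2)) (((d:ℝ) - 2) * x ^ ((d:ℝ) - 3)) x := by
      have := Real.hasDerivAt_rpow_const (x := x) (p := (d:ℝ) - 2) (Or.inl hx.ne')
      convert this using 2
      ring_nf
    have hi : HasDerivAt (fun x : ℝ => -x ^ 2 / 2) (-x) x := by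
      have := ((hasDerivAt_pow 2 x).neg).div_const 2
      refine this.congr_deriv ?_
      simp
      ring
    have h2 := hi.exp
    have h3 := h1.mul h2
    refine h3.congr_deriv ?_
    rw [show (d:ℝ) - 2 = ((d:ℝ) - 3) + 1 by ring, Real.rpow_add_one hx.ne']
    ring
  apply HasDerivAt.lhopital_zero_atTop (f' := fun x => -(fpow d x))
      (g' := fun x => (x ^ ((d:ℝ) - 3) * (c - x ^ 2)) * Real.exp (-x ^ 2 / 2))
  · filter_upwards [eventually_gt_atTop 0] with x hx; exact hasDerivAt_G d hx
  · filter_upwards [eventually_gt_atTop 0] with x hx; exact hD' x hx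
  · filter_upwards [eventually_gt_atTop (max 1 (d:ℝ))] with x hx
    have hx1 : 1 < x := (le_max_left _ _).trans_lt hx
    have hx0 : 0 < x := one_pos.trans hx1
    have hlt : c < x ^ 2 := by
      have h1 : (d:ℝ) < x := (le_max_right _ _).trans_lt hx
      have : x ≤ x ^ 2 := by nlinarith
      rw [hc]; nlinarith
    exact mul_ne_zero (mul_ne_zero (Real.rpow_pos_of_pos hx0 _).ne'
      (sub_neg.mpr hlt).ne) (Real.exp_pos _).ne'
  · exact G_tendsto d
  · exact D_tendsto d
  · have hinf : Tendsto (fun x : ℝ => x ^ 2 - c) atTop atTop := by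
      simp only [sub_eq_add_neg]
      exact tendsto_atTop_add_const_right _ (-c) (tendsto_pow_atTop two_ne_zero)
    have h0 : Tendsto (fun x : ℝ => c / (x ^ 2 - c)) atTop (nhds 0) :=
      tendsto_const_nhds.div_atTop hinf
    have hlim : Tendsto (fun x : ℝ => 1 + c / (x ^ 2 - c)) atTop (nhds 1) := by
      have := tendsto_const_nhds (x := (1:ℝ)) (f := atTop) |>.add h0
      simpa using this
    refine hlim.congr' ?_
    filter_upwards [eventually_gt_atTop (max 1 (d:ℝ))] with x hx
    have hx1 : 1 < x := (le_max_left _ _).trans_lt hx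
    have hx0 : 0 < x := one_pos.trans hx1
    have hlt : c < x ^ 2 := by
      have h1 : (d:ℝ) < x := (le_max_right _ _).trans_lt hx
      have : x ≤ x ^ 2 := by nlinarith
      rw [hc]; nlinarith
    have hA : x ^ ((d:ℝ) - 3) ≠ 0 := (Real.rpow_pos_of_pos hx0 _).ne'
    have hE : Real.exp (-x ^ 2 / 2) ≠ 0 := (Real.exp_pos _).ne'
    have h1 : c - x ^ 2 ≠ 0 := (sub_neg.mpr hlt).ne
    have h2 : x ^ 2 - c ≠ 0 := (sub_pos.mpr hlt).ne'
    have hfp : fpow d x = x ^ ((d:ℝ) - 3) * x ^ 2 * Real.exp (-x ^ 2 / 2) := by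
      unfold fpow
      rw [← Real.rpow_natCast x (d - 1), Nat.cast_sub hd, Nat.cast_one,
        show (d:ℝ) - 1 = ((d:ℝ) - 3) + 2 by ring, Real.rpow_add hx0,
        Real.rpow_two]
    rw [hfp]
    field_simp
    ring

lemma main_eq (d : ℕ) (hd : 1 ≤ d) {t Rt : ℝ} (ht : 0 < t) (hRt : 0 < Rt) :
    ∫ y in {y : EuclideanSpace ℝ (Fin d) | Rt ≤ ‖y‖},
        (2 * π * t) ^ (-(d : ℝ) / 2) * Real.exp (-‖y‖ ^ 2 / (2 * t))
      = ((2 * π ^ ((d : ℝ) / 2) / Real.Gamma ((d : ℝ) / 2)) / (2 * π) ^ ((d : ℝ) / 2))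
          * G d (Rt / Real.sqrt t) := by
  haveI : Nonempty (Fin d) := ⟨⟨0, hd⟩⟩
  haveI : Nontrivial (EuclideanSpace ℝ (Fin d)) := by
    apply Module.nontrivial_of_finrank_pos (R := ℝ)
    rw [finrank_euclideanSpace_fin]
    omega
  set c : ℝ := (2 * π * t) ^ (-(d : ℝ) / 2) with hcdef
  set g : ℝ → ℝ := fun r => c * Real.exp (-r ^ 2 / (2 * t)) with hgdef
  have hS : MeasurableSet {y : EuclideanSpace ℝ (Fin d) | Rt ≤ ‖y‖} :=
    measurableSet_le measurable_const measurable_norm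
  -- Step A: express as integral of a radial function over the whole space
  have hA : (∫ y in {y : EuclideanSpace ℝ (Fin d) | Rt ≤ ‖y‖},
        c * Real.exp (-‖y‖ ^ 2 / (2 * t)))
      = ∫ y : EuclideanSpace ℝ (Fin d), (Ici Rt).indicator g ‖y‖ := by
    rw [← integral_indicator hS]
    congr 1
  -- Step B: polar coordinates
  have hB := integral_fun_norm_addHaar (volume : Measure (EuclideanSpace ℝ (Fin d)))
    ((Ici Rt).indicator g)
  rw [finrank_euclideanSpace_fin] at hB
  -- Step C: radial integral reduces to Ioi Rt
  have hC : (∫ r in Ioi (0:ℝ), r ^ (d - 1) • (Ici Rt).indicator g r)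
      = ∫ r in Ioi Rt, r ^ (d - 1) * g r := by
    have hind : ∀ r : ℝ, r ^ (d - 1) • (Ici Rt).indicator g r
        = (Ici Rt).indicator (fun r => r ^ (d - 1) * g r) r := by
      intro r
      by_cases h : r ∈ Ici Rt <;> simp [h]
    simp_rw [hind]
    have hsub : Ici Rt ⊆ Ioi (0:ℝ) := fun r hr => lt_of_lt_of_le hRt hr
    rw [setIntegral_indicator measurableSet_Ici,
      Set.inter_eq_self_of_subset_right hsub, integral_Ici_eq_integral_Ioi]
  -- Step D: substitution r = sqrt t * x
  set b := Real.sqrt t with hbdef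
  have hb0 : 0 < b := Real.sqrt_pos.mpr ht
  have hb2 : b ^ 2 = t := Real.sq_sqrt ht.le
  have hE : ∀ x : ℝ, (b * x) ^ (d - 1) * g (b * x) = (b ^ (d - 1) * c) * fpow d x := by
    intro x
    rw [hgdef]
    simp only
    rw [show -(b * x) ^ 2 / (2 * t) = -x ^ 2 / 2 by
      rw [mul_pow, hb2]; field_simp]
    unfold fpow
    rw [mul_pow]
    ring
  have hD : (∫ r in Ioi Rt, r ^ (d - 1) * g r)
      = b * ((b ^ (d - 1) * c) * G d (Rt / b)) := by
    have hsub := integral_comp_mul_left_Ioi (fun r => r ^ (d - 1) * g r) (Rt / b) hb0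
    rw [mul_div_cancel₀ _ hb0.ne'] at hsub
    have : (∫ x in Ioi (Rt / b), (b * x) ^ (d - 1) * g (b * x))
        = (b ^ (d - 1) * c) * G d (Rt / b) := by
      simp_rw [hE]
      rw [integral_const_mul]
      rfl
    rw [this] at hsub
    rw [hsub, smul_eq_mul, ← mul_assoc, mul_inv_cancel₀ hb0.ne', one_mul]
  -- put it together
  rw [hA, hB, hC, hD, nsmul_eq_mul, smul_eq_mul]
  -- volume of the unit ball
  have hV : (volume (Metric.ball (0 : EuclideanSpace ℝ (Fin d)) 1)).toReal
      = Real.sqrt π ^ d / Real.Gamma ((d : ℝ) / 2 + 1) := by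
    rw [EuclideanSpace.volume_ball, Fintype.card_fin]
    rw [ENNReal.ofReal_one, one_pow, one_mul, ENNReal.toReal_ofReal]
    exact div_nonneg (pow_nonneg (Real.sqrt_nonneg _) _)
      (Real.Gamma_pos_of_pos (by positivity)).le
  rw [measureReal_def, hV]
  -- constant bookkeeping
  have hGamma : Real.Gamma ((d : ℝ) / 2 + 1) = ((d : ℝ) / 2) * Real.Gamma ((d : ℝ) / 2) :=
    Real.Gamma_add_one (by positivity)
  have hsqrtpi : Real.sqrt π ^ d = π ^ ((d : ℝ) / 2) := by
    rw [Real.sqrt_eq_rpow, ← Real.rpow_natCast (π ^ ((1:ℝ)/2)) d, ← Real.rpow_mul pi_pos.le]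
    norm_num
    rw [show (1:ℝ)/2 * d = (d:ℝ)/2 by ring]
  have hbd : b ^ d = t ^ ((d : ℝ) / 2) := by
    rw [hbdef, Real.sqrt_eq_rpow, ← Real.rpow_natCast (t ^ ((1:ℝ)/2)) d, ← Real.rpow_mul ht.le]
    norm_num
    rw [show (1:ℝ)/2 * d = (d:ℝ)/2 by ring]
  have hcval : c = ((2 * π) ^ ((d:ℝ)/2))⁻¹ * (t ^ ((d:ℝ)/2))⁻¹ := by
    rw [hcdef, show -(d:ℝ)/2 = -((d:ℝ)/2) by ring, Real.rpow_neg (by positivity),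
      Real.mul_rpow (by positivity) ht.le, mul_inv]
  -- now pure algebra
  have hbb : b * (b ^ (d-1) * c) = b ^ d * c := by
    rw [← mul_assoc, ← pow_succ']
    congr 2
    omega
  have ht2 : t ^ ((d:ℝ)/2) ≠ 0 := (Real.rpow_pos_of_pos ht _).ne'
  have hstep : b * (G d (Rt / b) * (b ^ (d - 1) * c))
      = G d (Rt / b) * ((2*π) ^ ((d:ℝ)/2))⁻¹ := by
    rw [show b * (G d (Rt / b) * (b ^ (d - 1) * c))
        = G d (Rt / b) * (b * (b ^ (d-1) * c)) by ring, hbb, hbd, hcval]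
    field_simp
  rw [mul_comm (b ^ (d-1) * c) (G d (Rt / b)), hstep, hsqrtpi, hGamma]
  have hG0 : Real.Gamma ((d:ℝ)/2) ≠ 0 := (Real.Gamma_pos_of_pos (by positivity)).ne'
  have hd0 : (d:ℝ) ≠ 0 := Nat.cast_ne_zero.mpr (by omega)
  have h2pi : ((2*π) ^ ((d:ℝ)/2)) ≠ 0 := (Real.rpow_pos_of_pos (by positivity) _).ne'
  field_simp

lemma sqrt_tendsto : Tendsto Real.sqrt atTop atTop :=
  (tendsto_rpow_atTop (y := 1/2) (by norm_num)).congr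
    (fun x => (Real.sqrt_eq_rpow x).symm)

end GaussTail

/-- Let `d ≥ 1`, `δ > 0`, `a(t) = o(t)` as `t → ∞`, and `R(t) = δt + a(t)`. Then as `t → ∞`,
`∫_{|y| ≥ R(t)} (2πt)^{-d/2} exp(−|y|²/(2t)) dy
  ∼ (ω_d/(2π)^{d/2}) e^{−R(t)²/(2t)} (R(t)/√t)^{d−2}`,
where `ω_d = 2π^{d/2}/Γ(d/2)` is the surface area of the unit sphere in `ℝ^d`. -/
theorem gaussian_tail_asymptotics (d : ℕ) (hd : 1 ≤ d) (δ : ℝ) (hδ : 0 < δ)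
    (a : ℝ → ℝ) (ha : Tendsto (fun t => a t / t) atTop (nhds 0))
    (R : ℝ → ℝ) (hR : ∀ t, R t = δ * t + a t) :
    Tendsto (fun t : ℝ =>
        (∫ y in {y : EuclideanSpace ℝ (Fin d) | R t ≤ ‖y‖},
            (2 * π * t) ^ (-(d : ℝ) / 2) * Real.exp (-‖y‖ ^ 2 / (2 * t)))
          / ((2 * π ^ ((d : ℝ) / 2) / Real.Gamma ((d : ℝ) / 2)) / (2 * π) ^ ((d : ℝ) / 2)
              * Real.exp (-(R t) ^ 2 / (2 * t)) * (R t / Real.sqrt t) ^ ((d : ℝ) - 2)))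
      atTop (nhds 1) := by
  have hφ : Tendsto (fun t => R t / Real.sqrt t) atTop atTop := by
    have hlim : Tendsto (fun t => δ + a t / t) atTop (nhds δ) := by
      simpa using (tendsto_const_nhds (x := δ)).add ha
    have hmul := GaussTail.sqrt_tendsto.atTop_mul_pos hδ hlim
    refine hmul.congr' ?_
    filter_upwards [eventually_gt_atTop 0] with t ht
    have h0 : Real.sqrt t ≠ 0 := (Real.sqrt_pos.mpr ht).ne'
    rw [hR t, eq_div_iff h0]
    calc Real.sqrt t * (δ + a t / t) * Real.sqrt t
        = (Real.sqrt t * Real.sqrt t) * (δ + a t / t) := by ring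
      _ = t * (δ + a t / t) := by rw [Real.mul_self_sqrt ht.le]
      _ = δ * t + a t := by field_simp
  have hev : ∀ᶠ t in atTop, 0 < t ∧ 0 < R t := by
    have h1 : ∀ᶠ t in atTop, |a t / t| < δ / 2 := by
      have := Metric.tendsto_nhds.mp ha (δ / 2) (half_pos hδ)
      simpa only [Real.dist_eq, sub_zero] using this
    filter_upwards [h1, eventually_gt_atTop 0] with t h ht
    refine ⟨ht, ?_⟩
    rw [hR t]
    have h2 : -(δ / 2) < a t / t := by
      have := abs_lt.mp h
      linarith [this.1]
    have h3 : -(δ / 2) * t < a t := (lt_div_iff₀ ht).mp h2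
    nlinarith
  have hK0 : ((2 * π ^ ((d : ℝ) / 2) / Real.Gamma ((d : ℝ) / 2)) / (2 * π) ^ ((d : ℝ) / 2)) ≠ 0 := by
    have hd0 : (0:ℝ) < (d:ℝ) := by exact_mod_cast hd
    have h1 : 0 < Real.Gamma ((d:ℝ)/2) := Real.Gamma_pos_of_pos (by positivity)
    have h2 : 0 < π ^ ((d:ℝ)/2) := Real.rpow_pos_of_pos pi_pos _
    have h3 : 0 < (2*π) ^ ((d:ℝ)/2) := Real.rpow_pos_of_pos (by positivity) _
    exact (div_pos (div_pos (by linarith) h1) h3).ne'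
  have hcomp := (GaussTail.key d hd).comp hφ
  refine hcomp.congr' ?_
  filter_upwards [hev] with t htt
  obtain ⟨ht, hRt⟩ := htt
  show GaussTail.G d (R t / Real.sqrt t) / GaussTail.D d (R t / Real.sqrt t) = _
  have hnum := GaussTail.main_eq d hd ht hRt
  have hden : (2 * π ^ ((d : ℝ) / 2) / Real.Gamma ((d : ℝ) / 2)) / (2 * π) ^ ((d : ℝ) / 2)
        * Real.exp (-(R t) ^ 2 / (2 * t)) * (R t / Real.sqrt t) ^ ((d : ℝ) - 2)
      = (2 * π ^ ((d : ℝ) / 2) / Real.Gamma ((d : ℝ) / 2)) / (2 * π) ^ ((d : ℝ) / 2)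
        * GaussTail.D d (R t / Real.sqrt t) := by
    unfold GaussTail.D
    rw [show -(R t / Real.sqrt t) ^ 2 / 2 = -(R t) ^ 2 / (2 * t) by
      rw [div_pow, Real.sq_sqrt ht.le]; ring]
    ring
  rw [hnum, hden]
  exact (mul_div_mul_left _ _ hK0).symm
end

section
/- For every integer d ≥ 1, every x ∈ ℝ^d, every t > 0 and every R ≥ 0, ∫_{{y : |y| ≥ R}} (2πt)^{-d/2} exp(−|x−y|²/(2t)) dy ≥ ∫_{{y : |y| ≥ R}} (2πt)^{-d/2} exp(−|y|²/(2t)) dy; equivalently, the Gaussian probability that a centered Gaussian vector with covariance t·Id started at x leaves the ball of radius R around the origin is minimized over starting points at x = 0. -/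
open Real MeasureTheory
open scoped ENNReal


lemma keymono {t : ℝ} (ht : 0 < t) {s c : ℝ} (h : s ^ 2 ≤ c ^ 2) :
    Real.exp (-c ^ 2 / (2 * t)) ≤ Real.exp (-s ^ 2 / (2 * t)) := by
  apply Real.exp_le_exp.2
  apply div_le_div_of_nonneg_right (by linarith) (by linarith) |>.trans_eq rfl

lemma lemA {t : ℝ} (ht : 0 < t) {a r : ℝ} (ha : 0 ≤ a) (hr : 0 ≤ r) :
    ∫ s in (-r)..r, Real.exp (-(s - a) ^ 2 / (2 * t)) ≤
      ∫ s in (-r)..r, Real.exp (-s ^ 2 / (2 * t)) := by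
  have hcont : Continuous fun s : ℝ => Real.exp (-s ^ 2 / (2 * t)) := by continuity
  have hint : ∀ u v : ℝ, IntervalIntegrable (fun s => Real.exp (-s ^ 2 / (2 * t))) volume u v :=
    fun u v => hcont.intervalIntegrable u v
  rcases le_or_gt (2 * r) a with hcase | hcase
  · apply intervalIntegral.integral_mono_on (by linarith)
      ((hcont.comp (by continuity)).intervalIntegrable _ _) (hint _ _)
    intro s hs
    rw [Set.mem_Icc] at hs
    show Real.exp (-(s - a) ^ 2 / (2 * t)) ≤ Real.exp (-s ^ 2 / (2 * t))
    exact keymono ht (by nlinarith [hs.1, hs.2])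
  · have h1 : (∫ s in (-r)..r, Real.exp (-(s - a) ^ 2 / (2 * t)))
        = ∫ s in (-r - a)..(r - a), Real.exp (-s ^ 2 / (2 * t)) := by
      rw [← intervalIntegral.integral_comp_sub_right _ a]
    rw [h1]
    have h2 : (∫ s in (-r)..r, Real.exp (-s ^ 2 / (2 * t)))
        = (∫ s in (-r)..(r - a), Real.exp (-s ^ 2 / (2 * t)))
          + ∫ s in (r - a)..r, Real.exp (-s ^ 2 / (2 * t)) :=
      (intervalIntegral.integral_add_adjacent_intervals (hint _ _) (hint _ _)).symm
    have h3 : (∫ s in (-r - a)..(r - a), Real.exp (-s ^ 2 / (2 * t)))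
        = (∫ s in (-r - a)..(-r), Real.exp (-s ^ 2 / (2 * t)))
          + ∫ s in (-r)..(r - a), Real.exp (-s ^ 2 / (2 * t)) :=
      (intervalIntegral.integral_add_adjacent_intervals (hint _ _) (hint _ _)).symm
    rw [h2, h3]
    have h4 : (∫ s in (-r - a)..(-r), Real.exp (-s ^ 2 / (2 * t)))
        = ∫ s in r..(r + a), Real.exp (-s ^ 2 / (2 * t)) := by
      calc (∫ s in (-r - a)..(-r), Real.exp (-s ^ 2 / (2 * t)))
          = ∫ s in (-(r + a))..(-r), Real.exp (-s ^ 2 / (2 * t)) := by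
            rw [show -r - a = -(r + a) by ring]
        _ = ∫ s in r..(r + a), Real.exp (-(-s) ^ 2 / (2 * t)) :=
            (intervalIntegral.integral_comp_neg fun s => Real.exp (-s ^ 2 / (2 * t))).symm
        _ = ∫ s in r..(r + a), Real.exp (-s ^ 2 / (2 * t)) := by simp [neg_sq]
    have h5 : (∫ s in (r - a)..r, Real.exp (-(s + a) ^ 2 / (2 * t)))
        = ∫ s in r..(r + a), Real.exp (-s ^ 2 / (2 * t)) := by
      rw [intervalIntegral.integral_comp_add_right (fun s => Real.exp (-s ^ 2 / (2 * t))) a]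
      rw [show r - a + a = r by ring]
    have h6 : (∫ s in (r - a)..r, Real.exp (-(s + a) ^ 2 / (2 * t)))
        ≤ ∫ s in (r - a)..r, Real.exp (-s ^ 2 / (2 * t)) := by
      apply intervalIntegral.integral_mono_on (by linarith)
        ((hcont.comp (by continuity)).intervalIntegrable _ _) (hint _ _)
      intro s hs
      rw [Set.mem_Icc] at hs
      show Real.exp (-(s + a) ^ 2 / (2 * t)) ≤ Real.exp (-s ^ 2 / (2 * t))
      exact keymono ht (by nlinarith [hs.1, hs.2])
    linarith


lemma gauss1d_integrable {t : ℝ} (ht : 0 < t) :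
    Integrable (fun s : ℝ => Real.exp (-s ^ 2 / (2 * t))) := by
  have : (fun s : ℝ => Real.exp (-s ^ 2 / (2 * t)))
      = fun s : ℝ => Real.exp (-(1 / (2 * t)) * s ^ 2) := by
    funext s; ring_nf
  rw [this]
  exact integrable_exp_neg_mul_sq (by positivity)

lemma lemB {t : ℝ} (ht : 0 < t) {a : ℝ} (ha : 0 ≤ a) (c : ℝ) :
    ∫ s in {s : ℝ | c ≤ s ^ 2}, Real.exp (-s ^ 2 / (2 * t)) ≤
      ∫ s in {s : ℝ | c ≤ s ^ 2}, Real.exp (-(s - a) ^ 2 / (2 * t)) := by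
  have hInt0 : Integrable (fun s : ℝ => Real.exp (-s ^ 2 / (2 * t))) := gauss1d_integrable ht
  have hInta : Integrable (fun s : ℝ => Real.exp (-(s - a) ^ 2 / (2 * t))) :=
    hInt0.comp_sub_right a
  have htot : (∫ s : ℝ, Real.exp (-(s - a) ^ 2 / (2 * t)))
      = ∫ s : ℝ, Real.exp (-s ^ 2 / (2 * t)) :=
    integral_sub_right_eq_self (fun s : ℝ => Real.exp (-s ^ 2 / (2 * t))) a
  rcases le_or_gt c 0 with hc | hc
  · have hset : {s : ℝ | c ≤ s ^ 2} = Set.univ := by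
      ext s; simp only [Set.mem_setOf_eq, Set.mem_univ, iff_true]
      nlinarith [sq_nonneg s]
    rw [hset, Measure.restrict_univ, htot]
  · set r := Real.sqrt c with hrdef
    have hr0 : 0 < r := Real.sqrt_pos.2 hc
    have hc' : c = r ^ 2 := (Real.sq_sqrt hc.le).symm
    have hset : {s : ℝ | c ≤ s ^ 2} = (Set.Ioo (-r) r)ᶜ := by
      ext s
      simp only [Set.mem_setOf_eq, Set.mem_compl_iff, Set.mem_Ioo, not_and_or, not_lt]
      rw [hc']
      constructor
      · intro h
        rcases le_or_gt s 0 with hs | hs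
        · left; nlinarith
        · right; nlinarith
      · rintro (h | h) <;> nlinarith
    have hIoo : ∀ f : ℝ → ℝ, Integrable f →
        (∫ s in (Set.Ioo (-r) r)ᶜ, f s) = (∫ s, f s) - ∫ s in (-r)..r, f s := by
      intro f hf
      have := integral_add_compl (s := Set.Ioo (-r) r) measurableSet_Ioo (μ := volume) (f := f) hf
      rw [intervalIntegral.integral_of_le (by linarith), integral_Ioc_eq_integral_Ioo]
      linarith
    rw [hset, hIoo _ hInt0, hIoo _ hInta, htot]
    have := lemA ht ha hr0.le
    linarith


lemma lemT {n : ℕ} {t : ℝ} (ht : 0 < t) (a c : ℝ) :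
    (∫⁻ w in {w : Fin (n + 1) → ℝ | c ≤ (w 0) ^ 2 + ∑ i : Fin n, w i.succ ^ 2},
        ENNReal.ofReal (Real.exp (-((w 0 - a) ^ 2 + ∑ i : Fin n, w i.succ ^ 2) / (2 * t))))
      = ∫⁻ w' : Fin n → ℝ,
          (∫⁻ s in {s : ℝ | c - ∑ i, w' i ^ 2 ≤ s ^ 2},
            ENNReal.ofReal (Real.exp (-(s - a) ^ 2 / (2 * t))))
          * ENNReal.ofReal (Real.exp (-(∑ i, w' i ^ 2) / (2 * t))) := by
  have hmp := (measurePreserving_piFinSuccAbove (fun _ : Fin (n + 1) => (volume : Measure ℝ)) 0).symm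
  set S : Set (Fin (n + 1) → ℝ) :=
    {w | c ≤ (w 0) ^ 2 + ∑ i : Fin n, w i.succ ^ 2} with hS
  set G : (Fin (n + 1) → ℝ) → ℝ≥0∞ := fun w =>
    ENNReal.ofReal (Real.exp (-((w 0 - a) ^ 2 + ∑ i : Fin n, w i.succ ^ 2) / (2 * t))) with hG
  show (∫⁻ w in S, G w) = _
  have hvol : (volume : Measure (Fin (n+1) → ℝ)) = Measure.pi fun _ => volume := volume_pi
  rw [hvol]
  rw [← hmp.setLIntegral_comp_preimage_emb (MeasurableEquiv.measurableEmbedding _) G S]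
  -- identify preimage set and composed integrand
  have hpre : ((MeasurableEquiv.piFinSuccAbove (fun _ : Fin (n+1) => ℝ) 0).symm ⁻¹' S)
      = {p : ℝ × (Fin n → ℝ) | c ≤ p.1 ^ 2 + ∑ i, p.2 i ^ 2} := by
    ext p
    simp only [Set.mem_preimage, hS, Set.mem_setOf_eq,
      MeasurableEquiv.piFinSuccAbove_symm_apply, Fin.insertNthEquiv, Equiv.coe_fn_mk,
      Fin.insertNth_zero, Fin.cons_zero, Fin.cons_succ, Fin.zero_succAbove, cast_eq]
  have hfun : ∀ p : ℝ × (Fin n → ℝ),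
      G ((MeasurableEquiv.piFinSuccAbove (fun _ : Fin (n+1) => ℝ) 0).symm p)
      = ENNReal.ofReal (Real.exp (-(p.1 - a) ^ 2 / (2 * t)))
        * ENNReal.ofReal (Real.exp (-(∑ i, p.2 i ^ 2) / (2 * t))) := by
    intro p
    simp only [hG, MeasurableEquiv.piFinSuccAbove_symm_apply, Fin.insertNthEquiv, Equiv.coe_fn_mk,
      Fin.insertNth_zero, Fin.cons_zero, Fin.cons_succ, Fin.zero_succAbove, cast_eq]
    rw [← ENNReal.ofReal_mul (Real.exp_nonneg _), ← Real.exp_add]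
    congr 1
    ring
  rw [lintegral_congr hfun, hpre]
  have hS' : MeasurableSet {p : ℝ × (Fin n → ℝ) | c ≤ p.1 ^ 2 + ∑ i, p.2 i ^ 2} := by
    apply measurableSet_le measurable_const
    fun_prop
  have hFmeas : Measurable (fun p : ℝ × (Fin n → ℝ) =>
      ENNReal.ofReal (Real.exp (-(p.1 - a) ^ 2 / (2 * t)))
        * ENNReal.ofReal (Real.exp (-(∑ i, p.2 i ^ 2) / (2 * t)))) := by
    fun_prop
  rw [← lintegral_indicator hS']
  rw [lintegral_prod_symm _ (hFmeas.indicator hS').aemeasurable]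
  rw [show (Measure.pi fun _ : Fin n => (volume : Measure ℝ)) = volume from volume_pi.symm]
  apply lintegral_congr
  intro w'
  have hptwise : ∀ s : ℝ,
      Set.indicator {p : ℝ × (Fin n → ℝ) | c ≤ p.1 ^ 2 + ∑ i, p.2 i ^ 2}
        (fun p => ENNReal.ofReal (Real.exp (-(p.1 - a) ^ 2 / (2 * t)))
          * ENNReal.ofReal (Real.exp (-(∑ i, p.2 i ^ 2) / (2 * t)))) (s, w')
      = Set.indicator {s : ℝ | c - ∑ i, w' i ^ 2 ≤ s ^ 2}
          (fun s => ENNReal.ofReal (Real.exp (-(s - a) ^ 2 / (2 * t)))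
            * ENNReal.ofReal (Real.exp (-(∑ i, w' i ^ 2) / (2 * t)))) s := by
    intro s
    rw [Set.indicator_apply, Set.indicator_apply]
    congr 1
    simp only [Set.mem_setOf_eq, eq_iff_iff]
    constructor <;> intro h <;> linarith
  simp only [hptwise]
  rw [lintegral_indicator (by apply measurableSet_le measurable_const; fun_prop)]
  rw [lintegral_mul_const _ (by fun_prop)]


lemma lemB' {t : ℝ} (ht : 0 < t) {a : ℝ} (ha : 0 ≤ a) (c : ℝ) :
    (∫⁻ s in {s : ℝ | c ≤ s ^ 2}, ENNReal.ofReal (Real.exp (-s ^ 2 / (2 * t)))) ≤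
      ∫⁻ s in {s : ℝ | c ≤ s ^ 2}, ENNReal.ofReal (Real.exp (-(s - a) ^ 2 / (2 * t))) := by
  rw [← ofReal_integral_eq_lintegral_ofReal ((gauss1d_integrable ht).integrableOn)
    (Filter.Eventually.of_forall fun s => Real.exp_nonneg _),
    ← ofReal_integral_eq_lintegral_ofReal (((gauss1d_integrable ht).comp_sub_right a).integrableOn)
    (Filter.Eventually.of_forall fun s => Real.exp_nonneg _)]
  exact ENNReal.ofReal_le_ofReal (lemB ht ha c)

lemma lemC {n : ℕ} {t : ℝ} (ht : 0 < t) {a : ℝ} (ha : 0 ≤ a) (c : ℝ) :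
    (∫⁻ w in {w : Fin (n + 1) → ℝ | c ≤ (w 0) ^ 2 + ∑ i : Fin n, w i.succ ^ 2},
        ENNReal.ofReal (Real.exp (-((w 0) ^ 2 + ∑ i : Fin n, w i.succ ^ 2) / (2 * t))))
      ≤ ∫⁻ w in {w : Fin (n + 1) → ℝ | c ≤ (w 0) ^ 2 + ∑ i : Fin n, w i.succ ^ 2},
          ENNReal.ofReal (Real.exp (-((w 0 - a) ^ 2 + ∑ i : Fin n, w i.succ ^ 2) / (2 * t))) := by
  have h0 := lemT (n := n) ht 0 c
  have ha' := lemT (n := n) ht a c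
  simp only [sub_zero] at h0
  rw [h0, ha']
  apply lintegral_mono
  intro w'
  exact mul_le_mul_left (lemB' ht ha _) _

lemma gaussEuclid_integrable {m : ℕ} {t : ℝ} (ht : 0 < t) :
    Integrable (fun y : EuclideanSpace ℝ (Fin m) => Real.exp (-‖y‖ ^ 2 / (2 * t))) := by
  have h := (GaussianFourier.integrable_cexp_neg_mul_sq_norm_add (V := EuclideanSpace ℝ (Fin m))
    (b := (((2 * t)⁻¹ : ℝ) : ℂ)) (by simpa using by positivity) 0 0).re
  apply h.congr
  filter_upwards with v
  simp only [zero_mul, add_zero]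
  have : (-(((2 * t)⁻¹ : ℝ) : ℂ) * (‖v‖ : ℂ) ^ 2) = ((-‖v‖ ^ 2 / (2 * t) : ℝ) : ℂ) := by
    push_cast; ring
  simp only [RCLike.re_to_complex]
  rw [this, Complex.exp_ofReal_re]


/-- For every `d ≥ 1`, `x ∈ ℝ^d`, `t > 0` and `R ≥ 0`, the Gaussian probability (centered at `x`,
covariance `t·Id`) of the complement of the ball of radius `R` around the origin is minimized at
`x = 0`. -/
theorem gaussian_tail_ge_centered (d : ℕ) (hd : 1 ≤ d) (x : EuclideanSpace ℝ (Fin d))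
    (t R : ℝ) (ht : 0 < t) (hR : 0 ≤ R) :
    (∫ y in {y : EuclideanSpace ℝ (Fin d) | R ≤ ‖y‖},
        (2 * π * t) ^ (-(d : ℝ) / 2) * Real.exp (-‖y‖ ^ 2 / (2 * t)))
      ≤ ∫ y in {y : EuclideanSpace ℝ (Fin d) | R ≤ ‖y‖},
          (2 * π * t) ^ (-(d : ℝ) / 2) * Real.exp (-‖x - y‖ ^ 2 / (2 * t)) := by
  obtain ⟨n, rfl⟩ : ∃ n, d = n + 1 := ⟨d - 1, by omega⟩
  rw [MeasureTheory.integral_const_mul, MeasureTheory.integral_const_mul]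
  have hC : (0 : ℝ) ≤ (2 * π * t) ^ (-((n + 1 : ℕ) : ℝ) / 2) := by
    apply Real.rpow_nonneg
    positivity
  apply mul_le_mul_of_nonneg_left ?_ hC
  set a : ℝ := ‖x‖ with haDef
  set e₀ : EuclideanSpace ℝ (Fin (n + 1)) := EuclideanSpace.single 0 1 with he₀
  set u : EuclideanSpace ℝ (Fin (n + 1)) := a • e₀ with hu
  have hxu : ‖x‖ = ‖u‖ := by
    rw [hu, norm_smul, he₀, EuclideanSpace.norm_single]
    simp [haDef, abs_of_nonneg (norm_nonneg x)]
  set S : Set (EuclideanSpace ℝ (Fin (n + 1))) := {y | R ≤ ‖y‖} with hSdef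
  have hInt0 : Integrable (fun y : EuclideanSpace ℝ (Fin (n + 1)) =>
      Real.exp (-‖y‖ ^ 2 / (2 * t))) := gaussEuclid_integrable ht
  have hIntx : Integrable (fun y : EuclideanSpace ℝ (Fin (n + 1)) =>
      Real.exp (-‖x - y‖ ^ 2 / (2 * t))) := by
    apply (hInt0.comp_sub_right x).congr
    filter_upwards with y
    rw [norm_sub_rev]
  rw [integral_eq_lintegral_of_nonneg_ae (Filter.Eventually.of_forall fun y => Real.exp_nonneg _)
      hInt0.integrableOn.aestronglyMeasurable,
    integral_eq_lintegral_of_nonneg_ae (Filter.Eventually.of_forall fun y => Real.exp_nonneg _)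
      hIntx.integrableOn.aestronglyMeasurable]
  apply ENNReal.toReal_mono hIntx.integrableOn.lintegral_lt_top.ne
  -- pointwise norms in coordinates
  have hnormsq : ∀ v : EuclideanSpace ℝ (Fin (n + 1)), ‖v‖ ^ 2 = ∑ i, (v i) ^ 2 := by
    intro v
    rw [EuclideanSpace.norm_eq, Real.sq_sqrt (by positivity)]
    simp [Real.norm_eq_abs, sq_abs]
  set K : Set (Fin (n + 1) → ℝ) :=
    {w | R ^ 2 ≤ (w 0) ^ 2 + ∑ i : Fin n, w i.succ ^ 2} with hKdef
  have transfer : ∀ b : ℝ,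
      (∫⁻ y in S, ENNReal.ofReal (Real.exp (-‖b • e₀ - y‖ ^ 2 / (2 * t))))
      = ∫⁻ w in K, ENNReal.ofReal
          (Real.exp (-((w 0 - b) ^ 2 + ∑ i : Fin n, w i.succ ^ 2) / (2 * t))) := by
    intro b
    have hm : MeasurePreserving (MeasurableEquiv.toLp 2 (Fin (n + 1) → ℝ)) :=
        (EuclideanSpace.volume_preserving_symm_measurableEquiv_toLp (Fin (n + 1))).symm
    rw [← hm.setLIntegral_comp_preimage_emb (MeasurableEquiv.measurableEmbedding _) _ S]
    have happ : ∀ (w : Fin (n + 1) → ℝ) (i : Fin (n + 1)),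
        ((MeasurableEquiv.toLp 2 (Fin (n + 1) → ℝ)) w) i = w i := fun w i => rfl
    have hpre : (MeasurableEquiv.toLp 2 (Fin (n + 1) → ℝ)) ⁻¹' S = K := by
      ext w
      simp only [Set.mem_preimage, hSdef, Set.mem_setOf_eq, hKdef]
      have h1 : ‖(MeasurableEquiv.toLp 2 (Fin (n + 1) → ℝ)) w‖ ^ 2
          = (w 0) ^ 2 + ∑ i : Fin n, w i.succ ^ 2 := by
        rw [hnormsq, Fin.sum_univ_succ]
        simp [happ]
      constructor
      · intro h
        nlinarith [norm_nonneg ((MeasurableEquiv.toLp 2 (Fin (n + 1) → ℝ)) w)]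
      · intro h
        nlinarith [norm_nonneg ((MeasurableEquiv.toLp 2 (Fin (n + 1) → ℝ)) w)]
    rw [hpre]
    apply lintegral_congr
    intro w
    congr 2
    rw [hnormsq, Fin.sum_univ_succ]
    have h0 : (b • e₀ - (MeasurableEquiv.toLp 2 (Fin (n + 1) → ℝ)) w) 0 = b - w 0 := by
      simp [he₀, PiLp.sub_apply, PiLp.smul_apply, EuclideanSpace.single_apply, happ]
    have hsucc : ∀ i : Fin n,
        (b • e₀ - (MeasurableEquiv.toLp 2 (Fin (n + 1) → ℝ)) w) i.succ = -(w i.succ) := by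
      intro i
      simp [he₀, PiLp.sub_apply, PiLp.smul_apply, EuclideanSpace.single_apply, happ, Fin.succ_ne_zero]
    rw [h0, Finset.sum_congr rfl fun i _ => by rw [hsucc i]]
    simp [neg_sq]
    ring
  have hrot : (∫⁻ y in S, ENNReal.ofReal (Real.exp (-‖u - y‖ ^ 2 / (2 * t))))
      = ∫⁻ y in S, ENNReal.ofReal (Real.exp (-‖x - y‖ ^ 2 / (2 * t))) := by
    set f := Submodule.reflection (ℝ ∙ (x - u))ᗮ with hf
    have hfx : f x = u := Submodule.reflection_sub hxu
    have hfu : f u = x := by rw [← hfx]; exact Submodule.reflection_reflection _ x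
    have hmp : MeasurePreserving f volume volume := f.measurePreserving
    have hemb : MeasurableEmbedding f := f.toHomeomorph.measurableEmbedding
    have hpre : ⇑f ⁻¹' S = S := by
      ext y
      simp [hSdef, Set.mem_preimage]
    calc (∫⁻ y in S, ENNReal.ofReal (Real.exp (-‖u - y‖ ^ 2 / (2 * t))))
        = ∫⁻ y in ⇑f ⁻¹' S, ENNReal.ofReal (Real.exp (-‖x - f y‖ ^ 2 / (2 * t))) := by
          rw [hpre]
          apply lintegral_congr
          intro y
          have : ‖x - f y‖ = ‖u - y‖ := by
            rw [← hfu, ← map_sub, f.norm_map]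
          rw [this]
      _ = ∫⁻ y in S, ENNReal.ofReal (Real.exp (-‖x - y‖ ^ 2 / (2 * t))) :=
          hmp.setLIntegral_comp_preimage_emb hemb (fun y => ENNReal.ofReal (Real.exp (-‖x - y‖ ^ 2 / (2 * t)))) S
  calc (∫⁻ y in S, ENNReal.ofReal (Real.exp (-‖y‖ ^ 2 / (2 * t))))
      = ∫⁻ y in S, ENNReal.ofReal (Real.exp (-‖(0 : ℝ) • e₀ - y‖ ^ 2 / (2 * t))) := by
        apply lintegral_congr
        intro y
        rw [zero_smul, zero_sub, norm_neg]
    _ = ∫⁻ w in K, ENNReal.ofReal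
          (Real.exp (-((w 0 - 0) ^ 2 + ∑ i : Fin n, w i.succ ^ 2) / (2 * t))) := transfer 0
    _ = ∫⁻ w in K, ENNReal.ofReal
          (Real.exp (-((w 0) ^ 2 + ∑ i : Fin n, w i.succ ^ 2) / (2 * t))) := by
        simp only [sub_zero]
    _ ≤ ∫⁻ w in K, ENNReal.ofReal
          (Real.exp (-((w 0 - a) ^ 2 + ∑ i : Fin n, w i.succ ^ 2) / (2 * t))) :=
        lemC ht (norm_nonneg x) (R ^ 2)
    _ = ∫⁻ y in S, ENNReal.ofReal (Real.exp (-‖a • e₀ - y‖ ^ 2 / (2 * t))) := (transfer a).symm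
    _ = ∫⁻ y in S, ENNReal.ofReal (Real.exp (-‖x - y‖ ^ 2 / (2 * t))) := hrot
end

section
/- Let d ≥ 1 be an integer, δ > 0, let a : (0,∞) → ℝ satisfy a(t) = o(t) as t → ∞, set R(t) = δt + a(t), and let K ⊂ ℝ^d be compact. Then there exist constants T > 0 and c > 0 such that for all x ∈ K and all t ≥ T one has |x| < R(t) and ∫_{{y : |y| ≥ R(t)}} (2πt)^{-d/2} exp(−|x−y|²/(2t)) dy ≤ c · e^{−R(t)²/(2t)} · (R(t)/√t)^{d−2}. -/
open Real MeasureTheory Filter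

open Set in
lemma aux_exp_int {c r : ℝ} (hc : 0 < c) :
    ∫ s in Ioi r, Real.exp (-(c * s)) = c⁻¹ * Real.exp (-(c * r)) := by
  have h := integral_comp_mul_left_Ioi (fun u => Real.exp (-u)) r hc
  simp only [smul_eq_mul] at h
  rw [h, integral_exp_neg_Ioi]

open Set in
lemma oneDim (d : ℕ) {r t : ℝ} (ht : 0 < t) (hr : 0 < r)
    (key : 2 * ((d : ℝ) - 1) * t ≤ r ^ 2) (hd : 1 ≤ d) :
    ∫ s in Ioi r, s ^ (d - 1) * Real.exp (-s ^ 2 / (2 * t))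
      ≤ (2 * t / r) * r ^ (d - 1) * Real.exp (-r ^ 2 / (2 * t)) := by
  set c : ℝ := r / (2 * t) with hc
  have hcpos : 0 < c := by positivity
  set A : ℝ := r ^ (d - 1) * Real.exp (-r ^ 2 / (2 * t)) * Real.exp (c * r) with hA
  have hd1 : (1:ℝ) ≤ (d:ℝ) := by exact_mod_cast hd
  have hbound : ∀ s ∈ Ioi r, s ^ (d - 1) * Real.exp (-s ^ 2 / (2 * t)) ≤ A * Real.exp (-(c * s)) := by
    intro s hs
    have hs' : r ≤ s := le_of_lt hs
    have hspos : 0 < s := hr.trans hs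
    have hu : 0 ≤ s - r := by linarith
    have h1 : s ^ (d - 1) ≤ r ^ (d - 1) * Real.exp (((d : ℝ) - 1) * ((s - r) / r)) := by
      have hsle : s ≤ r * Real.exp ((s - r) / r) := by
        have h0 := Real.add_one_le_exp ((s - r) / r)
        have h' : r * ((s - r) / r + 1) ≤ r * Real.exp ((s - r) / r) :=
          mul_le_mul_of_nonneg_left h0 hr.le
        calc s = r * ((s - r) / r + 1) := by field_simp; ring
        _ ≤ _ := h'
      calc s ^ (d - 1) ≤ (r * Real.exp ((s - r) / r)) ^ (d - 1) :=
            pow_le_pow_left₀ hspos.le hsle _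
        _ = r ^ (d - 1) * (Real.exp ((s - r) / r)) ^ (d - 1) := mul_pow _ _ _
        _ = r ^ (d - 1) * Real.exp (((d : ℝ) - 1) * ((s - r) / r)) := by
            rw [← Real.exp_nat_mul]
            congr 2
            have hcast : ((d - 1 : ℕ) : ℝ) = (d : ℝ) - 1 := by
              push_cast [Nat.cast_sub hd]; ring
            rw [hcast]
    have h2 : Real.exp (-s ^ 2 / (2 * t)) ≤
        Real.exp (-r ^ 2 / (2 * t) - (r / t) * (s - r)) := by
      apply Real.exp_le_exp.2
      have heq : -r ^ 2 / (2 * t) - (r / t) * (s - r) = (-r ^ 2 - 2 * r * (s - r)) / (2 * t) := by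
        field_simp
      rw [heq]
      gcongr
      nlinarith [sq_nonneg (s - r)]
    have hcore : ((d:ℝ) - 1) / r ≤ c := by
      rw [hc, div_le_div_iff₀ hr (by positivity)]
      nlinarith
    have h3 : ((d:ℝ) - 1) * ((s - r) / r) ≤ c * (s - r) := by
      have : ((d:ℝ) - 1) * ((s - r) / r) = (((d:ℝ) - 1) / r) * (s - r) := by ring
      rw [this]
      exact mul_le_mul_of_nonneg_right hcore hu
    have h4 : r / t = 2 * c := by rw [hc]; field_simp
    calc s ^ (d - 1) * Real.exp (-s ^ 2 / (2 * t))
        ≤ (r ^ (d - 1) * Real.exp (((d : ℝ) - 1) * ((s - r) / r))) *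
            Real.exp (-r ^ 2 / (2 * t) - (r / t) * (s - r)) :=
          mul_le_mul h1 h2 (Real.exp_pos _).le (by positivity)
      _ = r ^ (d - 1) * Real.exp (((d : ℝ) - 1) * ((s - r) / r) +
            (-r ^ 2 / (2 * t) - (r / t) * (s - r))) := by
          rw [mul_assoc, ← Real.exp_add]
      _ ≤ r ^ (d - 1) * Real.exp (-r ^ 2 / (2 * t) + (c * r - c * s)) := by
          apply mul_le_mul_of_nonneg_left _ (by positivity)
          apply Real.exp_le_exp.2
          have h5 : (r / t) * (s - r) = 2 * (c * (s - r)) := by rw [h4]; ring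
          have h6 : c * (s - r) = c * s - c * r := by ring
          linarith
      _ = A * Real.exp (-(c * s)) := by
          rw [hA, mul_assoc, mul_assoc, ← Real.exp_add, ← Real.exp_add]
          congr 2
  have hInt : IntegrableOn (fun s => A * Real.exp (-(c * s))) (Ioi r) := by
    have := (exp_neg_integrableOn_Ioi r hcpos).const_mul A
    simp only [neg_mul] at this; exact this
  calc ∫ s in Ioi r, s ^ (d - 1) * Real.exp (-s ^ 2 / (2 * t))
      ≤ ∫ s in Ioi r, A * Real.exp (-(c * s)) := by
        apply integral_mono_of_nonneg
        · refine (ae_restrict_iff' measurableSet_Ioi).2 (ae_of_all _ fun s hs => ?_)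
          have hsp : 0 < s := hr.trans hs
          positivity
        · exact hInt
        · exact (ae_restrict_iff' measurableSet_Ioi).2 (ae_of_all _ hbound)
    _ = A * (c⁻¹ * Real.exp (-(c * r))) := by
        rw [MeasureTheory.integral_const_mul, aux_exp_int hcpos]
    _ = (r ^ (d - 1) * Real.exp (-r ^ 2 / (2 * t))) * (c⁻¹ * (Real.exp (c * r) * Real.exp (-(c * r)))) := by
        rw [hA]; ring
    _ = (2 * t / r) * r ^ (d - 1) * Real.exp (-r ^ 2 / (2 * t)) := by
        have hex : Real.exp (c * r) * Real.exp (-(c * r)) = 1 := by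
          rw [← Real.exp_add]; simp
        have hinv : c⁻¹ = 2 * t / r := by rw [hc, inv_div]
        rw [hex, hinv]; ring

open Set in
lemma gaussian_integrable_euclidean (d : ℕ) {t : ℝ} (ht : 0 < t) :
    Integrable (fun v : EuclideanSpace ℝ (Fin d) => Real.exp (-(1 / (2 * t)) * ‖v‖ ^ 2)) := by
  have hb : (0 : ℝ) < 1 / (2 * t) := by positivity
  have hb' : (0 : ℝ) < ((1 / (2 * t) : ℝ) : ℂ).re := by simpa using hb
  have h := (GaussianFourier.integrable_cexp_neg_mul_sq_norm_add (V := EuclideanSpace ℝ (Fin d)) hb' 0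
    (0 : EuclideanSpace ℝ (Fin d))).norm
  refine h.congr (ae_of_all _ fun v => ?_)
  simp [Complex.norm_exp, ← Complex.ofReal_pow]

open Set in
lemma spaceBound (d : ℕ) (hd : 1 ≤ d) {m r Rt t : ℝ} (ht : 0 < t) (hm : 0 ≤ m)
    (hr : 0 < r) (hrR : r = Rt - m)
    (x : EuclideanSpace ℝ (Fin d)) (hx : ‖x‖ ≤ m) :
    ∫ y in {y : EuclideanSpace ℝ (Fin d) | Rt ≤ ‖y‖},
        (2 * π * t) ^ (-(d : ℝ) / 2) * Real.exp (-‖x - y‖ ^ 2 / (2 * t))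
      ≤ (2 * π * t) ^ (-(d : ℝ) / 2) *
        ((d : ℝ) * (volume (Metric.ball (0 : EuclideanSpace ℝ (Fin d)) 1)).toReal *
          ∫ s in Ioi r, s ^ (d - 1) * Real.exp (-s ^ 2 / (2 * t))) := by
  haveI : Nontrivial (EuclideanSpace ℝ (Fin d)) := by
    apply Module.nontrivial_of_finrank_pos (R := ℝ)
    rw [finrank_euclideanSpace_fin]
    exact_mod_cast hd
  set f : ℝ → ℝ := (Ici r).indicator (fun s => Real.exp (-s ^ 2 / (2 * t))) with hf
  have hfnn : ∀ s, 0 ≤ f s := fun s => Set.indicator_nonneg (fun u _ => (Real.exp_pos _).le) s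
  have hfm : Measurable f := by
    apply Measurable.indicator _ measurableSet_Ici
    fun_prop
  have hSm : MeasurableSet {y : EuclideanSpace ℝ (Fin d) | Rt ≤ ‖y‖} :=
    measurableSet_Ici.preimage (by fun_prop : Measurable fun y : EuclideanSpace ℝ (Fin d) => ‖y‖)
  have hC : (0:ℝ) ≤ (2 * π * t) ^ (-(d : ℝ) / 2) :=
    Real.rpow_nonneg (by positivity) _
  rw [MeasureTheory.integral_const_mul]
  apply mul_le_mul_of_nonneg_left _ hC
  have hInt : Integrable (fun y : EuclideanSpace ℝ (Fin d) => f ‖y - x‖) := by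
    have hg : Integrable (fun y : EuclideanSpace ℝ (Fin d) =>
        Real.exp (-(1 / (2 * t)) * ‖y - x‖ ^ 2)) :=
      (gaussian_integrable_euclidean d ht).comp_sub_right x
    apply hg.mono
    · exact (hfm.comp
        (by fun_prop : Measurable fun y : EuclideanSpace ℝ (Fin d) => ‖y - x‖)).aestronglyMeasurable
    · refine ae_of_all _ fun y => ?_
      rw [Real.norm_eq_abs, abs_of_nonneg (hfnn _), Real.norm_eq_abs, Real.abs_exp]
      have hh : -(1 / (2 * t)) * ‖y - x‖ ^ 2 = -‖y - x‖ ^ 2 / (2 * t) := by ring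
      rw [hh, hf]
      by_cases hy : ‖y - x‖ ∈ Ici r
      · rw [Set.indicator_of_mem hy]
      · rw [Set.indicator_of_notMem hy]
        exact (Real.exp_pos _).le
  have step2 : ∫ y in {y : EuclideanSpace ℝ (Fin d) | Rt ≤ ‖y‖},
      Real.exp (-‖x - y‖ ^ 2 / (2 * t)) ≤ ∫ y : EuclideanSpace ℝ (Fin d), f ‖y - x‖ := by
    rw [← MeasureTheory.integral_indicator hSm]
    apply integral_mono_of_nonneg
    · exact ae_of_all _ fun y => Set.indicator_nonneg (fun u _ => (Real.exp_pos _).le) y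
    · exact hInt
    · refine ae_of_all _ fun y => ?_
      dsimp only
      by_cases hy : y ∈ {y : EuclideanSpace ℝ (Fin d) | Rt ≤ ‖y‖}
      · rw [Set.indicator_of_mem hy, hf]
        have h1 : Rt ≤ ‖y‖ := hy
        have h2 : ‖y‖ - ‖x‖ ≤ ‖y - x‖ := norm_sub_norm_le y x
        have hyx : ‖y - x‖ ∈ Ici r := by
          simp only [mem_Ici]
          linarith [hrR]
        rw [Set.indicator_of_mem hyx, norm_sub_rev x y]
      · rw [Set.indicator_of_notMem hy]
        exact hfnn _
  have step3 : ∫ y : EuclideanSpace ℝ (Fin d), f ‖y - x‖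
      = ∫ z : EuclideanSpace ℝ (Fin d), f ‖z‖ :=
    integral_sub_right_eq_self (fun z : EuclideanSpace ℝ (Fin d) => f ‖z‖) x
  have step4 := integral_fun_norm_addHaar (volume : Measure (EuclideanSpace ℝ (Fin d))) f
  have hfin : Module.finrank ℝ (EuclideanSpace ℝ (Fin d)) = d := finrank_euclideanSpace_fin
  have step5 : ∫ y in Ioi (0:ℝ), y ^ (d - 1) • f y
      = ∫ s in Ioi r, s ^ (d - 1) * Real.exp (-s ^ 2 / (2 * t)) := by
    have heq : ∀ y : ℝ, y ^ (d - 1) • f y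
        = (Ici r).indicator (fun s => s ^ (d - 1) * Real.exp (-s ^ 2 / (2 * t))) y := by
      intro y
      by_cases hy : y ∈ Ici r
      · simp [hf, Set.indicator_of_mem hy]
      · simp [hf, Set.indicator_of_notMem hy]
    simp_rw [heq]
    rw [MeasureTheory.setIntegral_indicator measurableSet_Ici]
    have hinter : Ioi (0:ℝ) ∩ Ici r = Ici r := by
      apply Set.inter_eq_right.2
      intro y hy
      exact lt_of_lt_of_le hr hy
    rw [hinter, integral_Ici_eq_integral_Ioi]
  calc ∫ y in {y : EuclideanSpace ℝ (Fin d) | Rt ≤ ‖y‖}, Real.exp (-‖x - y‖ ^ 2 / (2 * t))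
      ≤ ∫ y : EuclideanSpace ℝ (Fin d), f ‖y - x‖ := step2
    _ = ∫ z : EuclideanSpace ℝ (Fin d), f ‖z‖ := step3
    _ = (d : ℝ) * (volume (Metric.ball (0 : EuclideanSpace ℝ (Fin d)) 1)).toReal *
          ∫ s in Ioi r, s ^ (d - 1) * Real.exp (-s ^ 2 / (2 * t)) := by
        rw [step4, hfin, step5]
        simp only [nsmul_eq_mul, smul_eq_mul, measureReal_def]
        ring

open Set in
lemma numeric (d : ℕ) (hd : 1 ≤ d) {B m r Rt t δ : ℝ} (hB : 0 < B) (hm : 0 ≤ m)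
    (ht : 0 < t) (hrpos : 0 < r) (hrR : r = Rt - m) (hRt2 : Rt ≤ 2 * δ * t)
    (hRm : 2 * m ≤ Rt) :
    (2 * π * t) ^ (-(d:ℝ)/2) * ((d:ℝ) * B * ((2 * t / r) * r ^ (d-1) * Real.exp (-r^2/(2*t))))
      ≤ (4 * (d:ℝ) * B * (2*π) ^ (-(d:ℝ)/2) * Real.exp (2*m*δ)) *
          Real.exp (-Rt^2/(2*t)) * (Rt / Real.sqrt t) ^ ((d:ℝ) - 2) := by
  have hRt0 : 0 < Rt := by linarith
  have hst : 0 < Real.sqrt t := Real.sqrt_pos.2 ht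
  have h2π : (0:ℝ) < 2 * π := by positivity
  have hd0 : (0:ℝ) < (d:ℝ) := by exact_mod_cast hd
  have hd1 : (1:ℝ) ≤ (d:ℝ) := by exact_mod_cast hd
  have hsq : Real.sqrt t ^ 2 = t := Real.sq_sqrt ht.le
  have htD : (0:ℝ) < t ^ ((d:ℝ)/2) := Real.rpow_pos_of_pos ht _
  have hrD : (0:ℝ) < r ^ (d:ℝ) := Real.rpow_pos_of_pos hrpos _
  have hRD : (0:ℝ) < Rt ^ (d:ℝ) := Real.rpow_pos_of_pos hRt0 _
  have hsqrtD : Real.sqrt t ^ ((d:ℝ)) = t ^ ((d:ℝ)/2) := by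
    rw [Real.sqrt_eq_rpow, ← Real.rpow_mul ht.le]
    congr 1
    ring
  have hfrac : ∀ {u : ℝ}, 0 < u → (u / Real.sqrt t) ^ ((d:ℝ) - 2)
      = (u ^ (d:ℝ) / t ^ ((d:ℝ)/2)) / (u^2 / t) := by
    intro u hu
    rw [Real.rpow_sub (by positivity), Real.rpow_two, Real.div_rpow hu.le (Real.sqrt_nonneg t),
      div_pow, hsq, hsqrtD]
  have hp1 : r ^ (d - 1) = r ^ ((d:ℝ) - 1) := by
    rw [← Real.rpow_natCast r (d - 1), Nat.cast_sub hd, Nat.cast_one]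
  have hkey : t ^ (-(d:ℝ)/2) * ((2 * t / r) * r ^ (d-1)) = 2 * (r / Real.sqrt t) ^ ((d:ℝ) - 2) := by
    rw [hfrac hrpos, hp1, Real.rpow_sub hrpos, Real.rpow_one,
      show (-(d:ℝ)/2) = -((d:ℝ)/2) by ring, Real.rpow_neg ht.le]
    field_simp
  -- exponential bound
  have hexp : Real.exp (-r^2/(2*t)) ≤ Real.exp (2*m*δ) * Real.exp (-Rt^2/(2*t)) := by
    rw [← Real.exp_add]
    apply Real.exp_le_exp.2
    have key : Rt^2 - r^2 ≤ 4*m*δ*t := by nlinarith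
    have h1 : (Rt^2 - r^2)/(2*t) ≤ 2*m*δ := by
      rw [div_le_iff₀ (by positivity)]
      nlinarith
    have heq : -r^2/(2*t) = -Rt^2/(2*t) + (Rt^2 - r^2)/(2*t) := by ring
    linarith
  -- ratio bound
  have hratio : (r / Real.sqrt t) ^ ((d:ℝ) - 2) ≤ 2 * (Rt / Real.sqrt t) ^ ((d:ℝ) - 2) := by
    have hsplit : (r / Real.sqrt t) ^ ((d:ℝ) - 2)
        = (Rt / Real.sqrt t) ^ ((d:ℝ) - 2) * (r / Rt) ^ ((d:ℝ) - 2) := by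
      rw [← Real.mul_rpow (by positivity) (by positivity)]
      congr 1
      field_simp
    rw [hsplit]
    have hb1 : r / Rt ≤ 1 := by
      rw [div_le_one hRt0]; linarith
    have hb0 : 0 < r / Rt := by positivity
    have h2 : (r / Rt) ^ ((d:ℝ) - 2) ≤ (r / Rt) ^ (-1 : ℝ) := by
      apply Real.rpow_le_rpow_of_exponent_ge hb0 hb1
      linarith
    have h3 : (r / Rt) ^ (-1 : ℝ) = Rt / r := by
      rw [Real.rpow_neg_one, inv_div]
    have h4 : Rt / r ≤ 2 := by
      rw [div_le_iff₀ hrpos]; linarith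
    have h5 : (r / Rt) ^ ((d:ℝ) - 2) ≤ 2 := by
      rw [h3] at h2; linarith
    have h6 : (0:ℝ) ≤ (Rt / Real.sqrt t) ^ ((d:ℝ) - 2) := by positivity
    nlinarith
  -- assemble
  have hmul : (2 * π * t) ^ (-(d:ℝ)/2) = (2*π) ^ (-(d:ℝ)/2) * t ^ (-(d:ℝ)/2) :=
    Real.mul_rpow h2π.le ht.le
  have hC : (0:ℝ) ≤ (d:ℝ) * B * (2*π) ^ (-(d:ℝ)/2) := by positivity
  calc (2 * π * t) ^ (-(d:ℝ)/2) * ((d:ℝ) * B * ((2 * t / r) * r ^ (d-1) * Real.exp (-r^2/(2*t))))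
      = ((d:ℝ) * B * (2*π) ^ (-(d:ℝ)/2)) *
          ((t ^ (-(d:ℝ)/2) * ((2 * t / r) * r ^ (d-1))) * Real.exp (-r^2/(2*t))) := by
        rw [hmul]; ring
    _ = ((d:ℝ) * B * (2*π) ^ (-(d:ℝ)/2)) *
          ((2 * (r / Real.sqrt t) ^ ((d:ℝ) - 2)) * Real.exp (-r^2/(2*t))) := by
        rw [hkey]
    _ ≤ ((d:ℝ) * B * (2*π) ^ (-(d:ℝ)/2)) *
          ((2 * (2 * (Rt / Real.sqrt t) ^ ((d:ℝ) - 2))) *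
            (Real.exp (2*m*δ) * Real.exp (-Rt^2/(2*t)))) := by
        apply mul_le_mul_of_nonneg_left _ hC
        apply mul_le_mul _ hexp (Real.exp_pos _).le (by positivity)
        linarith
    _ = (4 * (d:ℝ) * B * (2*π) ^ (-(d:ℝ)/2) * Real.exp (2*m*δ)) *
          Real.exp (-Rt^2/(2*t)) * (Rt / Real.sqrt t) ^ ((d:ℝ) - 2) := by ring

/-- Let `d ≥ 1`, `δ > 0`, `a(t) = o(t)` as `t → ∞`, `R(t) = δt + a(t)`, and `K ⊂ ℝ^d` compact.
Then there are `T > 0` and `c > 0` such that for all `x ∈ K` and all `t ≥ T` one has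
`|x| < R(t)` and `∫_{|y| ≥ R(t)} (2πt)^{-d/2} exp(−|x−y|²/(2t)) dy
  ≤ c e^{−R(t)²/(2t)} (R(t)/√t)^{d−2}`. -/
theorem gaussian_tail_upper_uniform (d : ℕ) (hd : 1 ≤ d) (δ : ℝ) (hδ : 0 < δ)
    (a : ℝ → ℝ) (ha : Tendsto (fun t => a t / t) atTop (nhds 0))
    (R : ℝ → ℝ) (hR : ∀ t, R t = δ * t + a t)
    (K : Set (EuclideanSpace ℝ (Fin d))) (hK : IsCompact K) :
    ∃ T c : ℝ, 0 < T ∧ 0 < c ∧ ∀ x ∈ K, ∀ t : ℝ, T ≤ t →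
      ‖x‖ < R t ∧
      (∫ y in {y : EuclideanSpace ℝ (Fin d) | R t ≤ ‖y‖},
          (2 * π * t) ^ (-(d : ℝ) / 2) * Real.exp (-‖x - y‖ ^ 2 / (2 * t)))
        ≤ c * Real.exp (-(R t) ^ 2 / (2 * t)) * (R t / Real.sqrt t) ^ ((d : ℝ) - 2) := by
  have hd0 : (0:ℝ) < (d:ℝ) := by exact_mod_cast hd
  obtain ⟨m0, hm0⟩ := hK.isBounded.subset_closedBall 0
  set m : ℝ := max m0 0 with hmdef
  have hm : 0 ≤ m := le_max_right _ _
  have hxm : ∀ x ∈ K, ‖x‖ ≤ m := by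
    intro x hx
    have := hm0 hx
    rw [Metric.mem_closedBall, dist_zero_right] at this
    exact le_trans this (le_max_left _ _)
  have habs : Tendsto (fun t => |a t / t|) atTop (nhds 0) := by
    simpa using ha.abs
  have h1 : ∀ᶠ t in atTop, |a t / t| < δ/2 :=
    habs.eventually_lt_const (by positivity)
  obtain ⟨T₀, hT₀⟩ := eventually_atTop.1 h1
  set B : ℝ := (volume (Metric.ball (0 : EuclideanSpace ℝ (Fin d)) 1)).toReal with hBdef
  have hB : 0 < B :=
    ENNReal.toReal_pos (Metric.measure_ball_pos volume _ one_pos).ne' measure_ball_lt_top.ne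
  refine ⟨max (max 1 (32*(d:ℝ)/δ^2)) (max T₀ ((4*m+2)/δ)),
    4 * (d:ℝ) * B * (2*π) ^ (-(d:ℝ)/2) * Real.exp (2*m*δ), ?_, ?_, ?_⟩
  · exact lt_of_lt_of_le one_pos (le_trans (le_max_left _ _) (le_max_left _ _))
  · apply mul_pos (mul_pos (mul_pos (by positivity) hB) (Real.rpow_pos_of_pos (by positivity) _))
      (Real.exp_pos _)
  intro x hx t htT
  have ht1 : 1 ≤ t := le_trans (le_trans (le_max_left _ _) (le_max_left _ _)) htT
  have ht0 : 0 < t := lt_of_lt_of_le one_pos ht1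
  have h32 : 32*(d:ℝ)/δ^2 ≤ t := le_trans (le_trans (le_max_right _ _) (le_max_left _ _)) htT
  have hmt : (4*m+2)/δ ≤ t := le_trans (le_trans (le_max_right _ _) (le_max_right _ _)) htT
  have hat : |a t / t| < δ/2 :=
    hT₀ t (le_trans (le_trans (le_max_left _ _) (le_max_right _ _)) htT)
  have habs' : |a t| ≤ δ/2 * t := by
    rw [abs_div, abs_of_pos ht0, div_lt_iff₀ ht0] at hat
    linarith [hat]
  have hRlow : δ/2 * t ≤ R t := by
    rw [hR t]
    have := neg_abs_le (a t)
    linarith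
  have hRhigh : R t ≤ 2*δ*t := by
    rw [hR t]
    have := le_abs_self (a t)
    have hδt : 0 < δ * t := mul_pos hδ ht0
    linarith
  have hRm1 : 2*m + 1 ≤ R t := by
    have h' := mul_le_mul_of_nonneg_left hmt (le_of_lt (half_pos hδ))
    have heq : δ/2*((4*m+2)/δ) = 2*m+1 := by field_simp; ring
    rw [heq] at h'
    linarith
  have hxnorm : ‖x‖ ≤ m := hxm x hx
  constructor
  · linarith
  set r : ℝ := R t - m with hrdef
  have hrpos : 0 < r := by
    rw [hrdef]; linarith
  have key : 2*((d:ℝ)-1)*t ≤ r^2 := by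
    have hr4 : δ*t/4 ≤ r := by rw [hrdef]; linarith
    have hsq : (δ*t/4)^2 ≤ r^2 := pow_le_pow_left₀ (by positivity) hr4 2
    have h32' : 32*(d:ℝ) ≤ δ^2*t := by
      rw [div_le_iff₀ (by positivity)] at h32; linarith
    nlinarith [mul_le_mul_of_nonneg_right h32' ht0.le]
  have hRm2 : 2*m ≤ R t := by linarith
  calc ∫ y in {y : EuclideanSpace ℝ (Fin d) | R t ≤ ‖y‖},
        (2 * π * t) ^ (-(d : ℝ) / 2) * Real.exp (-‖x - y‖ ^ 2 / (2 * t))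
      ≤ (2 * π * t) ^ (-(d : ℝ) / 2) * ((d : ℝ) * B *
          ∫ s in Set.Ioi r, s ^ (d - 1) * Real.exp (-s ^ 2 / (2 * t))) :=
        spaceBound d hd ht0 hm hrpos hrdef x hxnorm
    _ ≤ (2 * π * t) ^ (-(d : ℝ) / 2) *
          ((d:ℝ) * B * ((2 * t / r) * r ^ (d-1) * Real.exp (-r^2/(2*t)))) := by
        apply mul_le_mul_of_nonneg_left _ (Real.rpow_nonneg (by positivity) _)
        rw [mul_assoc, mul_assoc]
        apply mul_le_mul_of_nonneg_left _ hd0.le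
        apply mul_le_mul_of_nonneg_left _ hB.le
        exact oneDim d ht0 hrpos key hd
    _ ≤ (4 * (d:ℝ) * B * (2*π) ^ (-(d:ℝ)/2) * Real.exp (2*m*δ)) *
          Real.exp (-(R t)^2/(2*t)) * (R t / Real.sqrt t) ^ ((d:ℝ) - 2) :=
        numeric d hd hB hm ht0 hrpos hrdef hRhigh hRm2
end

section
/- Let d ≥ 1 be an integer, λ < 0, δ > √(−2λ), ε₁ ∈ (0, δ − √(−2λ)), and ε₂ > 0 with δ − ε₁ > √(2(−λ + ε₂)). Let a : (0,∞) → ℝ satisfy a(t) = o(t) as t → ∞ and set R(t) = δt + a(t). Then, as t → ∞, I(t) := (R(t) − ε₁t)^d ∫₀^t e^{(−λ+ε₂)s} (t − s)^{−(d+2)/2} exp(−(R(t) − ε₁t)²/(2(t − s))) ds ≍ e^{−(R(t)−ε₁t)²/(2t)} · t^{(d−2)/2}, i.e., there exist T, c₁, c₂ > 0 such that c₁ e^{−(R(t)−ε₁t)²/(2t)} t^{(d−2)/2} ≤ I(t) ≤ c₂ e^{−(R(t)−ε₁t)²/(2t)} t^{(d−2)/2} for all t ≥ T. -/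
open Real MeasureTheory Filter

lemma exp_neg_le_pow' (m : ℕ) (hm : 1 ≤ m) {z : ℝ} (hz : 0 < z) :
    Real.exp (-z) ≤ ((m : ℝ) / z) ^ m := by
  have hm0 : (0:ℝ) < m := by exact_mod_cast Nat.lt_of_lt_of_le Nat.zero_lt_one hm
  have h1 : (z / m) ^ m ≤ Real.exp z := by
    have he : Real.exp z = (Real.exp (z / m)) ^ m := by
      rw [← Real.exp_nat_mul]; congr 1; field_simp
    rw [he]
    exact pow_le_pow_left₀ (by positivity) (by linarith [Real.add_one_le_exp (z / m)]) m
  have h2 : 0 < (z / m) ^ m := by positivity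
  calc Real.exp (-z) = (Real.exp z)⁻¹ := Real.exp_neg z
    _ ≤ ((z / m) ^ m)⁻¹ := by exact inv_anti₀ h2 h1
    _ = ((m : ℝ) / z) ^ m := by rw [← inv_pow, inv_div]

lemma aux_upper' (m : ℕ) (hm : 1 ≤ m) (μ κ b t s : ℝ) (hμ : 0 < μ) (hκ : 0 < κ)
    (ht : 1 ≤ t) (hb : 0 < b) (hcond : (μ + 2 * κ) * (2 * t ^ 2) ≤ b ^ 2)
    (hs0 : 0 < s) (hst : s < t) :
    Real.exp (μ * s) * (Real.sqrt (t - s) ^ m)⁻¹ * Real.exp (-b ^ 2 / (2 * (t - s)))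
      ≤ ((2:ℝ) ^ m + (2 * m / κ) ^ m) * (Real.sqrt t ^ m)⁻¹
          * Real.exp (-b ^ 2 / (2 * t)) * Real.exp (-κ * s) := by
  have ht0 : (0:ℝ) < t := lt_of_lt_of_le one_pos ht
  have hu : 0 < t - s := by linarith
  have hm0 : (0:ℝ) < m := by exact_mod_cast Nat.lt_of_lt_of_le Nat.zero_lt_one hm
  have hsqt : 0 < Real.sqrt t := Real.sqrt_pos.mpr ht0
  have hsqu : 0 < Real.sqrt (t - s) := Real.sqrt_pos.mpr hu
  have key : μ * s - b ^ 2 / (2 * (t - s))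
      ≤ -b ^ 2 / (2 * t) - κ * s - κ * t ^ 2 / (t - s) + κ * t := by
    have hid : (μ * s - b ^ 2 / (2 * (t - s)))
        - (-b ^ 2 / (2 * t) - κ * s - κ * t ^ 2 / (t - s) + κ * t)
        = s * (2 * (μ + κ) * (t - s) * t + 2 * κ * t ^ 2 - b ^ 2) / (2 * (t - s) * t) := by
      field_simp
      ring
    have hnum : 2 * (μ + κ) * (t - s) * t + 2 * κ * t ^ 2 - b ^ 2 ≤ 0 := by
      nlinarith [mul_pos hu ht0, mul_pos hμ hs0, mul_pos hκ hs0,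
        mul_pos (mul_pos hμ hs0) ht0, mul_pos (mul_pos hκ hs0) ht0]
    have hq : s * (2 * (μ + κ) * (t - s) * t + 2 * κ * t ^ 2 - b ^ 2) / (2 * (t - s) * t) ≤ 0 := by
      apply div_nonpos_of_nonpos_of_nonneg
      · exact mul_nonpos_of_nonneg_of_nonpos hs0.le hnum
      · positivity
    linarith [hid ▸ hq]
  have hG : Real.exp (κ * t) * Real.exp (-κ * t ^ 2 / (t - s)) * (Real.sqrt (t - s) ^ m)⁻¹
      ≤ ((2:ℝ) ^ m + (2 * m / κ) ^ m) * (Real.sqrt t ^ m)⁻¹ := by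
    rcases le_or_gt (t / 2) (t - s) with hcase | hcase
    · have h1 : Real.exp (κ * t) * Real.exp (-κ * t ^ 2 / (t - s)) ≤ 1 := by
        rw [← Real.exp_add]
        apply Real.exp_le_one_iff.mpr
        have : κ * t ≤ κ * t ^ 2 / (t - s) := by
          rw [le_div_iff₀ hu]; nlinarith [mul_pos (mul_pos hκ ht0) hs0]
        have hd : -κ * t ^ 2 / (t - s) = -(κ * t ^ 2 / (t - s)) := by ring
        rw [hd]; linarith
      have h2 : (Real.sqrt (t - s) ^ m)⁻¹ ≤ 2 ^ m * (Real.sqrt t ^ m)⁻¹ := by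
        have hst2 : Real.sqrt t / 2 ≤ Real.sqrt (t - s) := by
          have e1 : Real.sqrt (t / 2) ≤ Real.sqrt (t - s) := Real.sqrt_le_sqrt hcase
          have e2 : Real.sqrt t / 2 ≤ Real.sqrt (t / 2) := by
            rw [Real.sqrt_div ht0.le]
            apply div_le_div_of_nonneg_left (Real.sqrt_nonneg t) (by positivity)
            calc Real.sqrt 2 ≤ Real.sqrt 4 := Real.sqrt_le_sqrt (by norm_num)
              _ = 2 := by rw [show (4:ℝ) = 2 ^ 2 by norm_num, Real.sqrt_sq (by norm_num)]
          linarith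
        have e3 : (Real.sqrt t / 2) ^ m ≤ Real.sqrt (t - s) ^ m :=
          pow_le_pow_left₀ (by positivity) hst2 m
        have e4 : (Real.sqrt (t - s) ^ m)⁻¹ ≤ ((Real.sqrt t / 2) ^ m)⁻¹ :=
          inv_anti₀ (by positivity) e3
        calc (Real.sqrt (t - s) ^ m)⁻¹ ≤ ((Real.sqrt t / 2) ^ m)⁻¹ := e4
          _ = 2 ^ m * (Real.sqrt t ^ m)⁻¹ := by
              rw [div_pow, inv_div]; ring
      calc Real.exp (κ * t) * Real.exp (-κ * t ^ 2 / (t - s)) * (Real.sqrt (t - s) ^ m)⁻¹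
          ≤ 1 * (2 ^ m * (Real.sqrt t ^ m)⁻¹) := by
            apply mul_le_mul h1 h2 (by positivity) (by norm_num)
        _ ≤ ((2:ℝ) ^ m + (2 * m / κ) ^ m) * (Real.sqrt t ^ m)⁻¹ := by
            rw [one_mul]
            apply mul_le_mul_of_nonneg_right _ (by positivity)
            have : (0:ℝ) ≤ (2 * m / κ) ^ m := by positivity
            linarith
    · have hz : Real.exp (κ * t) * Real.exp (-κ * t ^ 2 / (t - s))
          ≤ Real.exp (-(κ * t ^ 2 / (2 * (t - s)))) := by
        rw [← Real.exp_add]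
        apply Real.exp_le_exp.mpr
        have hd : -κ * t ^ 2 / (t - s) = -(κ * t ^ 2 / (t - s)) := by ring
        rw [hd]
        have h1 : κ * t ^ 2 / (2 * (t - s)) + κ * t ≤ κ * t ^ 2 / (t - s) := by
          rw [div_add' _ _ _ (by positivity), div_le_div_iff₀ (by positivity) hu]
          nlinarith [mul_pos (mul_pos (mul_pos hκ ht0) hu)
            (show (0:ℝ) < t - 2 * (t - s) by linarith)]
        linarith
      have hA : Real.exp (-(κ * t ^ 2 / (2 * (t - s)))) ≤ (2 * m * (t - s) / (κ * t ^ 2)) ^ m := by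
        have := exp_neg_le_pow' m hm (z := κ * t ^ 2 / (2 * (t - s))) (by positivity)
        convert this using 2
        field_simp
      have hfin : (2 * m * (t - s) / (κ * t ^ 2)) ^ m * (Real.sqrt (t - s) ^ m)⁻¹
          ≤ (2 * m / κ) ^ m * (Real.sqrt t ^ m)⁻¹ := by
        have hL : (2 * m * (t - s) / (κ * t ^ 2)) ^ m * (Real.sqrt (t - s) ^ m)⁻¹
            = (2 * m * Real.sqrt (t - s) / (κ * t ^ 2)) ^ m := by
          rw [← div_eq_mul_inv, ← div_pow]
          congr 1
          field_simp
          linear_combination -(Real.sq_sqrt hu.le)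
        have hR : (2 * m / κ) ^ m * (Real.sqrt t ^ m)⁻¹ = (2 * m / (κ * Real.sqrt t)) ^ m := by
          rw [← div_eq_mul_inv, ← div_pow]
          congr 1
          rw [div_div]
        rw [hL, hR]
        apply pow_le_pow_left₀ (by positivity)
        rw [div_le_div_iff₀ (by positivity) (by positivity)]
        have h1 : Real.sqrt (t - s) ≤ Real.sqrt t := Real.sqrt_le_sqrt (by linarith)
        have h2 : Real.sqrt t * Real.sqrt t = t := Real.mul_self_sqrt ht0.le
        have e2 : Real.sqrt (t - s) * Real.sqrt t ≤ t ^ 2 := by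
          have : Real.sqrt (t - s) * Real.sqrt t ≤ Real.sqrt t * Real.sqrt t :=
            mul_le_mul_of_nonneg_right h1 hsqt.le
          nlinarith
        calc 2 * (m:ℝ) * Real.sqrt (t - s) * (κ * Real.sqrt t)
            = 2 * (m:ℝ) * κ * (Real.sqrt (t - s) * Real.sqrt t) := by ring
          _ ≤ 2 * (m:ℝ) * κ * t ^ 2 := by
              apply mul_le_mul_of_nonneg_left e2 (by positivity)
          _ = 2 * (m:ℝ) * (κ * t ^ 2) := by ring
      calc Real.exp (κ * t) * Real.exp (-κ * t ^ 2 / (t - s)) * (Real.sqrt (t - s) ^ m)⁻¹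
          ≤ (2 * m * (t - s) / (κ * t ^ 2)) ^ m * (Real.sqrt (t - s) ^ m)⁻¹ := by
            apply mul_le_mul_of_nonneg_right (le_trans hz hA) (by positivity)
        _ ≤ (2 * m / κ) ^ m * (Real.sqrt t ^ m)⁻¹ := hfin
        _ ≤ ((2:ℝ) ^ m + (2 * m / κ) ^ m) * (Real.sqrt t ^ m)⁻¹ := by
            apply mul_le_mul_of_nonneg_right _ (by positivity)
            have : (0:ℝ) ≤ (2:ℝ) ^ m := by positivity
            linarith
  calc Real.exp (μ * s) * (Real.sqrt (t - s) ^ m)⁻¹ * Real.exp (-b ^ 2 / (2 * (t - s)))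
      = Real.exp (μ * s + -b ^ 2 / (2 * (t - s))) * (Real.sqrt (t - s) ^ m)⁻¹ := by
        rw [Real.exp_add]; ring
    _ ≤ Real.exp (-b ^ 2 / (2 * t) - κ * s - κ * t ^ 2 / (t - s) + κ * t)
          * (Real.sqrt (t - s) ^ m)⁻¹ := by
        apply mul_le_mul_of_nonneg_right _ (by positivity)
        apply Real.exp_le_exp.mpr
        have h : μ * s + -b ^ 2 / (2 * (t - s)) = μ * s - b ^ 2 / (2 * (t - s)) := by ring
        linarith [key, h ▸ le_refl (μ * s + -b ^ 2 / (2 * (t - s)))]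
    _ = Real.exp (-b ^ 2 / (2 * t)) * Real.exp (-κ * s)
          * (Real.exp (κ * t) * Real.exp (-κ * t ^ 2 / (t - s)) * (Real.sqrt (t - s) ^ m)⁻¹) := by
        rw [show -b ^ 2 / (2 * t) - κ * s - κ * t ^ 2 / (t - s) + κ * t
            = -b ^ 2 / (2 * t) + -κ * s + (κ * t + -κ * t ^ 2 / (t - s)) by ring,
          Real.exp_add, Real.exp_add, Real.exp_add]
        ring
    _ ≤ Real.exp (-b ^ 2 / (2 * t)) * Real.exp (-κ * s)
          * (((2:ℝ) ^ m + (2 * m / κ) ^ m) * (Real.sqrt t ^ m)⁻¹) := by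
        apply mul_le_mul_of_nonneg_left hG (by positivity)
    _ = ((2:ℝ) ^ m + (2 * m / κ) ^ m) * (Real.sqrt t ^ m)⁻¹
          * Real.exp (-b ^ 2 / (2 * t)) * Real.exp (-κ * s) := by ring

lemma rpow_to_sqrt' (d : ℕ) {x : ℝ} (hx : 0 < x) :
    x ^ (-((d:ℝ) + 2) / 2) = (Real.sqrt x ^ (d + 2))⁻¹ := by
  rw [neg_div, Real.rpow_neg hx.le]
  congr 1
  rw [Real.sqrt_eq_rpow, ← Real.rpow_natCast (x ^ ((1:ℝ)/2)), ← Real.rpow_mul hx.le]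
  congr 1
  push_cast; ring

lemma integral_exp_neg_bound' (κ t : ℝ) (hκ : 0 < κ) (ht : 0 < t) :
    ∫ s in Set.Ioo (0:ℝ) t, Real.exp (-κ * s) ≤ 1 / κ := by
  have hder : ∀ x ∈ Set.uIcc (0:ℝ) t,
      HasDerivAt (fun s => -Real.exp (-κ * s) / κ) (Real.exp (-κ * x)) x := by
    intro x _
    have h1 : HasDerivAt (fun s : ℝ => -κ * s) (-κ) x := by
      simpa using (hasDerivAt_id x).const_mul (-κ)
    have h3 := ((h1.exp).div_const κ).neg
    have hκ' : κ ≠ 0 := ne_of_gt hκ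
    have he : Real.exp (-κ * x) = -(Real.exp (-κ * x) * -κ / κ) := by
      field_simp
    have h4 : (fun s : ℝ => -Real.exp (-κ * s) / κ) = fun s : ℝ => -(Real.exp (-κ * s) / κ) := by
      funext y; ring
    rw [h4, he]
    exact h3
  have hint : IntervalIntegrable (fun s => Real.exp (-κ * s)) volume 0 t :=
    (Real.continuous_exp.comp (continuous_const.mul continuous_id)).intervalIntegrable 0 t
  have hval : ∫ s in (0:ℝ)..t, Real.exp (-κ * s)
      = -Real.exp (-κ * t) / κ - -Real.exp (-κ * 0) / κ :=
    intervalIntegral.integral_eq_sub_of_hasDerivAt hder hint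
  have heq : ∫ s in Set.Ioo (0:ℝ) t, Real.exp (-κ * s)
      = ∫ s in (0:ℝ)..t, Real.exp (-κ * s) := by
    rw [intervalIntegral.integral_of_le ht.le, integral_Ioc_eq_integral_Ioo]
  rw [heq, hval]
  have h0 : Real.exp (-κ * 0) = 1 := by norm_num
  rw [h0]
  have h1 : 0 < Real.exp (-κ * t) / κ := div_pos (Real.exp_pos _) hκ
  have h2 : -Real.exp (-κ * t) / κ - -1 / κ = 1 / κ - Real.exp (-κ * t) / κ := by ring
  rw [h2]
  linarith

lemma aux_lower_exp' (β b t s : ℝ) (hβ : 0 < β) (ht2 : 2 ≤ t) (hs0 : 0 < s) (hs1 : s < 1)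
    (hb0 : 0 < b) (hbhi : b ≤ 2 * β * t) :
    Real.exp (-(2 * β) ^ 2) * Real.exp (-b ^ 2 / (2 * t)) ≤ Real.exp (-b ^ 2 / (2 * (t - s))) := by
  have ht0 : (0:ℝ) < t := by linarith
  have hu : 0 < t - s := by linarith
  rw [← Real.exp_add]
  apply Real.exp_le_exp.mpr
  have hdiff : b ^ 2 / (2 * (t - s)) - b ^ 2 / (2 * t) = b ^ 2 * s / (2 * t * (t - s)) := by
    field_simp
    ring
  have hb2 : b ^ 2 ≤ 4 * β ^ 2 * t ^ 2 := by
    have h := pow_le_pow_left₀ hb0.le hbhi 2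
    have h2 : (2 * β * t) ^ 2 = 4 * β ^ 2 * t ^ 2 := by ring
    linarith
  have h2t : t ^ 2 ≤ 2 * t * (t - s) := by nlinarith
  have hkey : b ^ 2 * s / (2 * t * (t - s)) ≤ (2 * β) ^ 2 := by
    rw [div_le_iff₀ (by positivity)]
    nlinarith [mul_nonneg (sq_nonneg b) (by linarith : (0:ℝ) ≤ 1 - s),
      mul_le_mul_of_nonneg_left h2t (by positivity : (0:ℝ) ≤ 4 * β ^ 2)]
  have hneg : -(2 * β) ^ 2 + -b ^ 2 / (2 * t) = -((2 * β) ^ 2) - b ^ 2 / (2 * t) := by ring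
  have hneg2 : -b ^ 2 / (2 * (t - s)) = -(b ^ 2 / (2 * (t - s))) := by ring
  rw [hneg, hneg2]
  linarith

set_option maxHeartbeats 1000000 in
/-- Let `d ≥ 1`, `λ < 0`, `δ > √(−2λ)`, `ε₁ ∈ (0, δ − √(−2λ))`, `ε₂ > 0` with
`δ − ε₁ > √(2(−λ + ε₂))`, `a(t) = o(t)` and `R(t) = δt + a(t)`. Then
`I(t) = (R(t) − ε₁t)^d ∫₀^t e^{(−λ+ε₂)s} (t−s)^{−(d+2)/2} exp(−(R(t)−ε₁t)²/(2(t−s))) ds`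
satisfies `I(t) ≍ e^{−(R(t)−ε₁t)²/(2t)} t^{(d−2)/2}` as `t → ∞`. -/
theorem integral_asymp_supercritical (d : ℕ) (hd : 1 ≤ d) (l : ℝ) (hl : l < 0)
    (δ : ℝ) (hδ : Real.sqrt (-2 * l) < δ)
    (ε₁ : ℝ) (hε₁ : ε₁ ∈ Set.Ioo 0 (δ - Real.sqrt (-2 * l)))
    (ε₂ : ℝ) (hε₂ : 0 < ε₂) (hδε : Real.sqrt (2 * (-l + ε₂)) < δ - ε₁)
    (a : ℝ → ℝ) (ha : Tendsto (fun t => a t / t) atTop (nhds 0))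
    (R : ℝ → ℝ) (hR : ∀ t, R t = δ * t + a t) :
    ∃ T c₁ c₂ : ℝ, 0 < T ∧ 0 < c₁ ∧ 0 < c₂ ∧ ∀ t : ℝ, T ≤ t →
      c₁ * (Real.exp (-(R t - ε₁ * t) ^ 2 / (2 * t)) * t ^ (((d : ℝ) - 2) / 2))
          ≤ (R t - ε₁ * t) ^ (d : ℕ)
            * ∫ s in Set.Ioo (0 : ℝ) t,
                Real.exp ((-l + ε₂) * s) * (t - s) ^ (-((d : ℝ) + 2) / 2)
                  * Real.exp (-(R t - ε₁ * t) ^ 2 / (2 * (t - s)))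
        ∧ (R t - ε₁ * t) ^ (d : ℕ)
            * (∫ s in Set.Ioo (0 : ℝ) t,
                Real.exp ((-l + ε₂) * s) * (t - s) ^ (-((d : ℝ) + 2) / 2)
                  * Real.exp (-(R t - ε₁ * t) ^ 2 / (2 * (t - s))))
          ≤ c₂ * (Real.exp (-(R t - ε₁ * t) ^ 2 / (2 * t)) * t ^ (((d : ℝ) - 2) / 2)) := by
  obtain ⟨hε₁0, hε₁lt⟩ := hε₁
  have hsq2l : 0 ≤ Real.sqrt (-2 * l) := Real.sqrt_nonneg _
  set μ : ℝ := -l + ε₂ with hμdef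
  have hμ : 0 < μ := by rw [hμdef]; linarith
  set β : ℝ := δ - ε₁ with hβdef
  have hβ : 0 < β := by rw [hβdef]; linarith
  have hsμ : Real.sqrt (2 * μ) < β := hδε
  set βm : ℝ := (β + Real.sqrt (2 * μ)) / 2 with hβmdef
  have hsqμnn : 0 ≤ Real.sqrt (2 * μ) := Real.sqrt_nonneg _
  have hβm : 0 < βm := by rw [hβmdef]; linarith
  have h2μm : 2 * μ < βm ^ 2 := by
    have h1 : Real.sqrt (2 * μ) < βm := by rw [hβmdef]; linarith
    exact (Real.sqrt_lt' hβm).mp h1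
  set κ : ℝ := (βm ^ 2 / 2 - μ) / 2 with hκdef
  have hκ : 0 < κ := by rw [hκdef]; linarith
  have hμκ : (μ + 2 * κ) * 2 = βm ^ 2 := by rw [hκdef]; ring
  set ε₃ : ℝ := (β - Real.sqrt (2 * μ)) / 2 with hε₃def
  have hε₃ : 0 < ε₃ := by rw [hε₃def]; linarith
  have hβε₃ : β - ε₃ = βm := by rw [hε₃def, hβmdef]; ring
  have hβε₃' : β + ε₃ ≤ 2 * β := by rw [hε₃def]; linarith
  obtain ⟨N, hN⟩ := Metric.tendsto_atTop.mp ha ε₃ hε₃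
  set C : ℝ := 2 ^ (d + 2) + (2 * (d + 2 : ℕ) / κ) ^ (d + 2) with hCdef
  have hC0 : 0 < C := by
    rw [hCdef]; positivity
  refine ⟨max N 2, βm ^ d * Real.exp (-(2 * β) ^ 2), (2 * β) ^ d * (C / κ),
    lt_of_lt_of_le two_pos (le_max_right N 2), by positivity, by positivity, ?_⟩
  intro t ht
  have ht2 : (2:ℝ) ≤ t := le_trans (le_max_right N 2) ht
  have ht1 : (1:ℝ) ≤ t := by linarith
  have ht0 : (0:ℝ) < t := by linarith
  have hat : |a t / t| < ε₃ := by
    have := hN t (le_trans (le_max_left N 2) ht)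
    rwa [Real.dist_eq, sub_zero] at this
  set b : ℝ := R t - ε₁ * t with hbdef
  have hbeq : b = β * t + a t := by rw [hbdef, hR t, hβdef]; ring
  have hblo : βm * t ≤ b := by
    have h1 : -ε₃ < a t / t := (abs_lt.mp hat).1
    have h2 : -ε₃ * t < a t := (lt_div_iff₀ ht0).mp h1
    have h3 : (β - ε₃) * t = β * t - ε₃ * t := by ring
    rw [hbeq, ← hβε₃, h3]; linarith
  have hbhi : b ≤ 2 * β * t := by
    have h1 : a t / t < ε₃ := (abs_lt.mp hat).2
    have h2 : a t < ε₃ * t := (div_lt_iff₀ ht0).mp h1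
    have e1 : (β + ε₃) * t ≤ 2 * β * t := mul_le_mul_of_nonneg_right hβε₃' ht0.le
    have e2 : β * t + ε₃ * t = (β + ε₃) * t := by ring
    rw [hbeq]; linarith
  have hb0 : 0 < b := lt_of_lt_of_le (by positivity) hblo
  have hcond : (μ + 2 * κ) * (2 * t ^ 2) ≤ b ^ 2 := by
    have h1 : (βm * t) ^ 2 ≤ b ^ 2 := pow_le_pow_left₀ (by positivity) hblo 2
    have h2 : (μ + 2 * κ) * (2 * t ^ 2) = ((μ + 2 * κ) * 2) * t ^ 2 := by ring
    rw [h2, hμκ]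
    calc βm ^ 2 * t ^ 2 = (βm * t) ^ 2 := by ring
      _ ≤ b ^ 2 := h1
  -- pointwise facts
  have hrwF : ∀ s ∈ Set.Ioo (0:ℝ) t,
      Real.exp (μ * s) * (t - s) ^ (-((d:ℝ) + 2) / 2) * Real.exp (-b ^ 2 / (2 * (t - s)))
      = Real.exp (μ * s) * (Real.sqrt (t - s) ^ (d + 2))⁻¹
          * Real.exp (-b ^ 2 / (2 * (t - s))) := by
    intro s hs
    rw [rpow_to_sqrt' d (by linarith [hs.2] : (0:ℝ) < t - s)]
  have hupPt : ∀ s ∈ Set.Ioo (0:ℝ) t,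
      Real.exp (μ * s) * (t - s) ^ (-((d:ℝ) + 2) / 2) * Real.exp (-b ^ 2 / (2 * (t - s)))
      ≤ C * (Real.sqrt t ^ (d + 2))⁻¹ * Real.exp (-b ^ 2 / (2 * t)) * Real.exp (-κ * s) := by
    intro s hs
    rw [hrwF s hs, hCdef]
    exact aux_upper' (d + 2) (by omega) μ κ b t s hμ hκ ht1 hb0 hcond hs.1 hs.2
  have hFnn : ∀ s ∈ Set.Ioo (0:ℝ) t,
      0 ≤ Real.exp (μ * s) * (t - s) ^ (-((d:ℝ) + 2) / 2)
          * Real.exp (-b ^ 2 / (2 * (t - s))) := by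
    intro s hs
    have h : (0:ℝ) ≤ t - s := by linarith [hs.2]
    exact mul_nonneg (mul_nonneg (Real.exp_pos _).le (Real.rpow_nonneg h _))
      (Real.exp_pos _).le
  have hmeasF : Measurable (fun s : ℝ =>
      Real.exp (μ * s) * (t - s) ^ (-((d:ℝ) + 2) / 2)
        * Real.exp (-b ^ 2 / (2 * (t - s)))) := by
    apply Measurable.mul
    apply Measurable.mul
    · exact Real.measurable_exp.comp (measurable_const.mul measurable_id)
    · exact (measurable_const.sub measurable_id).pow_const _
    · exact Real.measurable_exp.comp (measurable_const.div
        (measurable_const.mul (measurable_const.sub measurable_id)))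
  have hK : 0 ≤ C * (Real.sqrt t ^ (d + 2))⁻¹ * Real.exp (-b ^ 2 / (2 * t)) := by positivity
  have hconst1 : IntegrableOn (fun _ : ℝ => C * (Real.sqrt t ^ (d + 2))⁻¹
      * Real.exp (-b ^ 2 / (2 * t))) (Set.Ioo 0 t) :=
    integrableOn_const measure_Ioo_lt_top.ne
  have hintF : IntegrableOn (fun s : ℝ =>
      Real.exp (μ * s) * (t - s) ^ (-((d:ℝ) + 2) / 2)
        * Real.exp (-b ^ 2 / (2 * (t - s)))) (Set.Ioo 0 t) := by
    apply Integrable.mono' hconst1 hmeasF.aestronglyMeasurable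
    filter_upwards [ae_restrict_mem measurableSet_Ioo] with s hs
    rw [Real.norm_eq_abs, abs_of_nonneg (hFnn s hs)]
    calc Real.exp (μ * s) * (t - s) ^ (-((d:ℝ) + 2) / 2) * Real.exp (-b ^ 2 / (2 * (t - s)))
        ≤ C * (Real.sqrt t ^ (d + 2))⁻¹ * Real.exp (-b ^ 2 / (2 * t)) * Real.exp (-κ * s) :=
          hupPt s hs
      _ ≤ C * (Real.sqrt t ^ (d + 2))⁻¹ * Real.exp (-b ^ 2 / (2 * t)) * 1 := by
          apply mul_le_mul_of_nonneg_left _ hK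
          apply Real.exp_le_one_iff.mpr
          have : 0 ≤ κ * s := mul_nonneg hκ.le hs.1.le
          linarith
      _ = C * (Real.sqrt t ^ (d + 2))⁻¹ * Real.exp (-b ^ 2 / (2 * t)) := mul_one _
  have hintG : IntegrableOn (fun s : ℝ =>
      C * (Real.sqrt t ^ (d + 2))⁻¹ * Real.exp (-b ^ 2 / (2 * t)) * Real.exp (-κ * s))
      (Set.Ioo 0 t) := by
    apply IntegrableOn.mono_set _ Set.Ioo_subset_Icc_self
    apply Continuous.integrableOn_Icc
    exact continuous_const.mul (Real.continuous_exp.comp (continuous_const.mul continuous_id))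
  have hIub : (∫ s in Set.Ioo (0:ℝ) t,
        Real.exp (μ * s) * (t - s) ^ (-((d:ℝ) + 2) / 2) * Real.exp (-b ^ 2 / (2 * (t - s))))
      ≤ C * (Real.sqrt t ^ (d + 2))⁻¹ * Real.exp (-b ^ 2 / (2 * t)) * (1 / κ) := by
    calc (∫ s in Set.Ioo (0:ℝ) t,
          Real.exp (μ * s) * (t - s) ^ (-((d:ℝ) + 2) / 2) * Real.exp (-b ^ 2 / (2 * (t - s))))
        ≤ ∫ s in Set.Ioo (0:ℝ) t,
            C * (Real.sqrt t ^ (d + 2))⁻¹ * Real.exp (-b ^ 2 / (2 * t)) * Real.exp (-κ * s) :=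
          setIntegral_mono_on hintF hintG measurableSet_Ioo hupPt
      _ = C * (Real.sqrt t ^ (d + 2))⁻¹ * Real.exp (-b ^ 2 / (2 * t))
            * ∫ s in Set.Ioo (0:ℝ) t, Real.exp (-κ * s) := by
          rw [MeasureTheory.integral_const_mul]
      _ ≤ C * (Real.sqrt t ^ (d + 2))⁻¹ * Real.exp (-b ^ 2 / (2 * t)) * (1 / κ) := by
          apply mul_le_mul_of_nonneg_left (integral_exp_neg_bound' κ t hκ ht0) hK
  have hlowPt : ∀ s ∈ Set.Ioo (0:ℝ) 1,
      Real.exp (-(2 * β) ^ 2) * (Real.sqrt t ^ (d + 2))⁻¹ * Real.exp (-b ^ 2 / (2 * t))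
      ≤ Real.exp (μ * s) * (t - s) ^ (-((d:ℝ) + 2) / 2) * Real.exp (-b ^ 2 / (2 * (t - s))) := by
    intro s hs
    obtain ⟨hs0, hs1⟩ := hs
    have hst : s < t := by linarith
    have hu : 0 < t - s := by linarith
    have e1 : (1:ℝ) ≤ Real.exp (μ * s) := by
      rw [Real.one_le_exp_iff]; positivity
    have e2 : (Real.sqrt t ^ (d + 2))⁻¹ ≤ (Real.sqrt (t - s) ^ (d + 2))⁻¹ := by
      apply inv_anti₀ (by positivity)
      exact pow_le_pow_left₀ (Real.sqrt_nonneg _) (Real.sqrt_le_sqrt (by linarith)) _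
    have e3 : Real.exp (-(2 * β) ^ 2) * Real.exp (-b ^ 2 / (2 * t))
        ≤ Real.exp (-b ^ 2 / (2 * (t - s))) :=
      aux_lower_exp' β b t s hβ ht2 hs0 hs1 hb0 hbhi
    calc Real.exp (-(2 * β) ^ 2) * (Real.sqrt t ^ (d + 2))⁻¹ * Real.exp (-b ^ 2 / (2 * t))
        = 1 * (Real.sqrt t ^ (d + 2))⁻¹
            * (Real.exp (-(2 * β) ^ 2) * Real.exp (-b ^ 2 / (2 * t))) := by ring
      _ ≤ Real.exp (μ * s) * (Real.sqrt (t - s) ^ (d + 2))⁻¹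
            * Real.exp (-b ^ 2 / (2 * (t - s))) := by
          apply mul_le_mul (mul_le_mul e1 e2 (by positivity) (by positivity)) e3
            (by positivity) (by positivity)
      _ = Real.exp (μ * s) * (t - s) ^ (-((d:ℝ) + 2) / 2)
            * Real.exp (-b ^ 2 / (2 * (t - s))) := by
          rw [rpow_to_sqrt' d hu]
  have hsub : Set.Ioo (0:ℝ) 1 ⊆ Set.Ioo 0 t := Set.Ioo_subset_Ioo le_rfl (by linarith)
  have hIlb : Real.exp (-(2 * β) ^ 2) * (Real.sqrt t ^ (d + 2))⁻¹ * Real.exp (-b ^ 2 / (2 * t))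
      ≤ ∫ s in Set.Ioo (0:ℝ) t,
          Real.exp (μ * s) * (t - s) ^ (-((d:ℝ) + 2) / 2)
            * Real.exp (-b ^ 2 / (2 * (t - s))) := by
    calc Real.exp (-(2 * β) ^ 2) * (Real.sqrt t ^ (d + 2))⁻¹ * Real.exp (-b ^ 2 / (2 * t))
        = ∫ _ in Set.Ioo (0:ℝ) 1,
            Real.exp (-(2 * β) ^ 2) * (Real.sqrt t ^ (d + 2))⁻¹
              * Real.exp (-b ^ 2 / (2 * t)) := by
          rw [setIntegral_const]
          simp [Real.volume_Ioo]
      _ ≤ ∫ s in Set.Ioo (0:ℝ) 1,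
            Real.exp (μ * s) * (t - s) ^ (-((d:ℝ) + 2) / 2)
              * Real.exp (-b ^ 2 / (2 * (t - s))) :=
          setIntegral_mono_on (integrableOn_const measure_Ioo_lt_top.ne)
            (hintF.mono_set hsub) measurableSet_Ioo hlowPt
      _ ≤ ∫ s in Set.Ioo (0:ℝ) t,
            Real.exp (μ * s) * (t - s) ^ (-((d:ℝ) + 2) / 2)
              * Real.exp (-b ^ 2 / (2 * (t - s))) := by
          apply setIntegral_mono_set hintF
          · filter_upwards [ae_restrict_mem measurableSet_Ioo] with s hs using hFnn s hs
          · exact HasSubset.Subset.eventuallyLE hsub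
  have hpow : t ^ (((d:ℝ) - 2) / 2) = (t:ℝ) ^ (d:ℕ) * (Real.sqrt t ^ (d + 2))⁻¹ := by
    rw [← rpow_to_sqrt' d ht0, ← Real.rpow_natCast t d, ← Real.rpow_add ht0]
    congr 1
    ring
  have hInn : 0 ≤ ∫ s in Set.Ioo (0:ℝ) t,
      Real.exp (μ * s) * (t - s) ^ (-((d:ℝ) + 2) / 2)
        * Real.exp (-b ^ 2 / (2 * (t - s))) :=
    setIntegral_nonneg measurableSet_Ioo hFnn
  constructor
  · -- lower bound
    have h1 : (βm * t) ^ d ≤ b ^ d := pow_le_pow_left₀ (by positivity) hblo d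
    calc βm ^ d * Real.exp (-(2 * β) ^ 2)
          * (Real.exp (-b ^ 2 / (2 * t)) * t ^ (((d:ℝ) - 2) / 2))
        = (βm * t) ^ d * (Real.exp (-(2 * β) ^ 2) * (Real.sqrt t ^ (d + 2))⁻¹
            * Real.exp (-b ^ 2 / (2 * t))) := by
          rw [hpow, mul_pow βm t d]; ring
      _ ≤ b ^ d * ∫ s in Set.Ioo (0:ℝ) t,
            Real.exp (μ * s) * (t - s) ^ (-((d:ℝ) + 2) / 2)
              * Real.exp (-b ^ 2 / (2 * (t - s))) := by
          apply mul_le_mul h1 hIlb (by positivity) (by positivity)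
  · -- upper bound
    have h2 : b ^ d ≤ (2 * β * t) ^ d := pow_le_pow_left₀ hb0.le hbhi d
    calc b ^ d * ∫ s in Set.Ioo (0:ℝ) t,
          Real.exp (μ * s) * (t - s) ^ (-((d:ℝ) + 2) / 2)
            * Real.exp (-b ^ 2 / (2 * (t - s)))
        ≤ (2 * β * t) ^ d
            * (C * (Real.sqrt t ^ (d + 2))⁻¹ * Real.exp (-b ^ 2 / (2 * t)) * (1 / κ)) := by
          apply mul_le_mul h2 hIub hInn (by positivity)
      _ = (2 * β) ^ d * (C / κ)
            * (Real.exp (-b ^ 2 / (2 * t)) * t ^ (((d:ℝ) - 2) / 2)) := by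
          rw [hpow, mul_pow (2 * β) t d]; ring
end

section
/- For every integer d ≥ 1 and all reals b > 0, c > 0, t > 0, the following change-of-variables identity holds: ∫₀^t e^{cs} (t − s)^{−(d+2)/2} exp(−b²/(2(t − s))) ds = 2 e^{ct − √(2c)·b} ∫_{−∞}^{S} e^{−w²} · F(w)^d / √(w² + 2√(2c)·b) dw, where F(w) = 2√c / (w + √(w² + 2√(2c)·b)) and S = √(ct) − b/√(2t). -/
open Real MeasureTheory

/-- For every `d ≥ 1` and all reals `b > 0`, `c > 0`, `t > 0`:
`∫₀^t e^{cs} (t−s)^{−(d+2)/2} exp(−b²/(2(t−s))) ds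
  = 2 e^{ct − √(2c) b} ∫_{−∞}^{S} e^{−w²} F(w)^d / √(w² + 2√(2c) b) dw`,
where `F(w) = 2√c / (w + √(w² + 2√(2c) b))` and `S = √(ct) − b/√(2t)`. -/
theorem change_of_variables_identity (d : ℕ) (hd : 1 ≤ d) (b c t : ℝ)
    (hb : 0 < b) (hc : 0 < c) (ht : 0 < t) :
    (∫ s in Set.Ioo (0 : ℝ) t,
        Real.exp (c * s) * (t - s) ^ (-((d : ℝ) + 2) / 2) * Real.exp (-b ^ 2 / (2 * (t - s))))
      = 2 * Real.exp (c * t - Real.sqrt (2 * c) * b)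
        * ∫ w in Set.Iio (Real.sqrt (c * t) - b / Real.sqrt (2 * t)),
            Real.exp (-w ^ 2)
              * (2 * Real.sqrt c / (w + Real.sqrt (w ^ 2 + 2 * Real.sqrt (2 * c) * b))) ^ (d : ℕ)
              / Real.sqrt (w ^ 2 + 2 * Real.sqrt (2 * c) * b) := by
  have h2c : Real.sqrt (2 * c) = Real.sqrt 2 * Real.sqrt c := Real.sqrt_mul (by norm_num) c
  have hs2 : Real.sqrt 2 * Real.sqrt 2 = 2 := Real.mul_self_sqrt (by norm_num)
  have hsc : Real.sqrt c * Real.sqrt c = c := Real.mul_self_sqrt hc.le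
  have hs2p : (0:ℝ) < Real.sqrt 2 := Real.sqrt_pos.2 (by norm_num)
  have hscp : (0:ℝ) < Real.sqrt c := Real.sqrt_pos.2 hc
  set K : ℝ := 2 * Real.sqrt (2 * c) * b with hK
  have hK0 : 0 < K := by positivity
  set g : ℝ → ℝ := fun v => Real.sqrt (c * v) - b / Real.sqrt (2 * v) with hgdef
  set g' : ℝ → ℝ := fun v => c / (2 * Real.sqrt (c * v)) + b / (2 * v * Real.sqrt (2 * v)) with hg'def
  set G : ℝ → ℝ := fun w => Real.exp (-w ^ 2)
      * (2 * Real.sqrt c / (w + Real.sqrt (w ^ 2 + K))) ^ d / Real.sqrt (w ^ 2 + K) with hGdef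
  -- basic facts at positive v
  have hcvsqrt : ∀ v : ℝ, 0 < v → Real.sqrt (c * v) = Real.sqrt c * Real.sqrt v :=
    fun v _ => Real.sqrt_mul hc.le v
  have h2vsqrt : ∀ v : ℝ, 0 < v → Real.sqrt (2 * v) = Real.sqrt 2 * Real.sqrt v :=
    fun v _ => Real.sqrt_mul (by norm_num) v
  -- strict monotonicity
  have hmono : StrictMonoOn g (Set.Ioi (0:ℝ)) := by
    intro v₁ hv₁ v₂ hv₂ hlt
    simp only [Set.mem_Ioi] at hv₁ hv₂
    have h1 : Real.sqrt (c * v₁) < Real.sqrt (c * v₂) :=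
      Real.sqrt_lt_sqrt (by positivity) (by nlinarith)
    have h2 : b / Real.sqrt (2 * v₂) ≤ b / Real.sqrt (2 * v₁) := by
      gcongr
    simp only [hgdef]
    linarith
  -- image of (0,t)
  have himg : g '' Set.Ioo 0 t = Set.Iio (g t) := by
    ext w
    constructor
    · rintro ⟨v, hv, rfl⟩
      exact Set.mem_Iio.2 (hmono (Set.mem_Ioi.2 hv.1) (Set.mem_Ioi.2 ht) hv.2)
    · intro hw
      simp only [Set.mem_Iio] at hw
      set A := Real.sqrt (w ^ 2 + K) with hAdef
      have hA2 : A ^ 2 = w ^ 2 + K := Real.sq_sqrt (by positivity)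
      have hA0 : 0 ≤ A := Real.sqrt_nonneg _
      have hwA : 0 < w + A := by nlinarith
      set u := (w + A) / (2 * Real.sqrt c) with hudef
      have hu0 : 0 < u := by positivity
      have hsqu : Real.sqrt (u ^ 2) = u := Real.sqrt_sq hu0.le
      have hgeq : g (u ^ 2) = w := by
        simp only [hgdef]
        rw [hcvsqrt _ (by positivity), h2vsqrt _ (by positivity), hsqu, hudef]
        rw [h2c] at hK
        have hA2' : A ^ 2 = w ^ 2 + 2 * (Real.sqrt 2 * Real.sqrt c) * b := by rw [hA2, hK]
        field_simp
        linear_combination (Real.sqrt 2) * hA2'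
          + (2 * Real.sqrt c * b) * hs2
      refine ⟨u ^ 2, ⟨by positivity, ?_⟩, hgeq⟩
      by_contra h
      push_neg at h
      have hle := hmono.monotoneOn (Set.mem_Ioi.2 ht)
        (Set.mem_Ioi.2 (by positivity : (0:ℝ) < u ^ 2)) h
      rw [hgeq] at hle
      linarith
  -- derivative
  have hderiv : ∀ v ∈ Set.Ioo (0:ℝ) t, HasDerivWithinAt g (g' v) (Set.Ioo 0 t) v := by
    intro v hv
    obtain ⟨hv0, hvt⟩ := hv
    have hcv : (0:ℝ) < c * v := by positivity
    have h2v : (0:ℝ) < 2 * v := by positivity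
    have ha : HasDerivAt (fun v => Real.sqrt (c * v)) (c / (2 * Real.sqrt (c * v))) v := by
      have h1 : HasDerivAt (fun v : ℝ => c * v) c v := by
        simpa using (hasDerivAt_id v).const_mul c
      have h2 := (Real.hasDerivAt_sqrt hcv.ne').comp v h1
      refine h2.congr_deriv ?_
      ring
    have hbd : HasDerivAt (fun v => b / Real.sqrt (2 * v))
        (-(b / (2 * v * Real.sqrt (2 * v)))) v := by
      have h1 : HasDerivAt (fun v : ℝ => 2 * v) 2 v := by
        simpa using (hasDerivAt_id v).const_mul 2
      have h2 := (Real.hasDerivAt_sqrt h2v.ne').comp v h1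
      have h3 := (h2.inv (Real.sqrt_ne_zero'.2 h2v)).const_mul b
      have hss : Real.sqrt (2 * v) ^ 2 = 2 * v := Real.sq_sqrt h2v.le
      simp only [Function.comp_def] at h3
      have h4 : (fun v : ℝ => b / Real.sqrt (2 * v))
          = fun v : ℝ => b * (Real.sqrt (2 * v))⁻¹ := by
        funext x; rw [div_eq_mul_inv]
      rw [h4]
      refine h3.congr_deriv ?_
      rw [hss]
      field_simp
    have hsum := ha.sub hbd
    have : HasDerivAt g (g' v) v := by
      simp only [hgdef, hg'def]
      refine hsum.congr_deriv ?_
      ring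
    exact this.hasDerivWithinAt
  -- injectivity
  have hinj : Set.InjOn g (Set.Ioo 0 t) :=
    (hmono.injOn).mono (fun v hv => hv.1)
  -- change of variables
  have hcov : (∫ w in Set.Iio (g t), G w) = ∫ v in Set.Ioo (0:ℝ) t, |g' v| • G (g v) := by
    rw [← himg]
    exact MeasureTheory.integral_image_eq_integral_abs_deriv_smul measurableSet_Ioo hderiv hinj G
  -- pointwise identity
  have hpt : ∀ v ∈ Set.Ioo (0:ℝ) t, |g' v| • G (g v)
      = Real.exp (Real.sqrt (2*c) * b - c * t) / 2
        * (Real.exp (c * (t - v)) * v ^ (-((d : ℝ) + 2) / 2) * Real.exp (-b ^ 2 / (2 * v))) := by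
    intro v hv
    obtain ⟨hv0, hvt⟩ := hv
    set u := Real.sqrt v with hudef
    have hu0 : 0 < u := Real.sqrt_pos.2 hv0
    have hu2 : u ^ 2 = v := Real.sq_sqrt hv0.le
    have hcv : Real.sqrt (c * v) = Real.sqrt c * u := hcvsqrt v hv0
    have h2v : Real.sqrt (2 * v) = Real.sqrt 2 * u := h2vsqrt v hv0
    set P : ℝ := Real.sqrt c * u + b / (Real.sqrt 2 * u) with hPdef
    have hP0 : 0 < P := by positivity
    have hsqP : Real.sqrt ((g v) ^ 2 + K) = P := by
      have hPP : (g v) ^ 2 + K = P ^ 2 := by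
        simp only [hgdef, hcv, h2v, hPdef, hK, h2c]
        field_simp
        linear_combination (2 * b * Real.sqrt c * u ^ 2 * Real.sqrt 2) * hs2
      rw [hPP, Real.sqrt_sq hP0.le]
    have hgP : g v + P = 2 * Real.sqrt c * u := by
      simp only [hgdef, hcv, h2v, hPdef]
      field_simp
      ring
    have hg'v : g' v = P / (2 * v) := by
      simp only [hg'def, hcv, h2v, hPdef]
      rw [← hu2]
      field_simp
      linear_combination (-(u ^ 2 * Real.sqrt 2)) * hsc
    have habs : |g' v| = P / (2 * v) := by
      rw [hg'v]
      exact abs_of_pos (by positivity)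
    have hw2 : (g v) ^ 2 = c * v + b ^ 2 / (2 * v) - Real.sqrt (2 * c) * b := by
      simp only [hgdef, hcv, h2v, h2c]
      rw [← hu2]
      field_simp
      linear_combination (2 * Real.sqrt c * u ^ 2 * Real.sqrt 2 * b - b ^ 2) * hs2
        + (2 * u ^ 4 * Real.sqrt 2 ^ 2) * hsc
    have hvr : v ^ (-((d : ℝ) + 2) / 2) = (u ^ (d + 2) : ℝ)⁻¹ := by
      rw [← hu2, ← Real.rpow_natCast u 2, ← Real.rpow_mul hu0.le]
      rw [show ((2:ℕ):ℝ) * (-((d : ℝ) + 2) / 2) = -((d:ℝ)+2) by push_cast; ring]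
      rw [Real.rpow_neg hu0.le]
      congr 1
      rw [show ((d:ℝ)+2) = ((d+2 : ℕ):ℝ) by push_cast; ring, Real.rpow_natCast]
    have hexp : Real.exp (-(g v) ^ 2)
        = Real.exp (Real.sqrt (2 * c) * b - c * t)
          * (Real.exp (c * (t - v)) * Real.exp (-b ^ 2 / (2 * v))) := by
      rw [← Real.exp_add, ← Real.exp_add]
      congr 1
      rw [hw2]
      ring
    have hfrac : 2 * Real.sqrt c / (2 * Real.sqrt c * u) = u⁻¹ := by
      field_simp
    rw [smul_eq_mul, habs, hGdef]
    simp only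
    rw [hsqP, show g v + P = 2 * Real.sqrt c * u from hgP, hfrac, hexp, hvr, ← hu2]
    field_simp
    ring
    rw [inv_pow, mul_assoc, mul_inv_cancel₀ (pow_ne_zero d hu0.ne'), mul_one]
  -- reflection
  have hrefl : (∫ s in Set.Ioo (0 : ℝ) t,
        Real.exp (c * s) * (t - s) ^ (-((d : ℝ) + 2) / 2) * Real.exp (-b ^ 2 / (2 * (t - s))))
      = ∫ v in Set.Ioo (0:ℝ) t,
        Real.exp (c * (t - v)) * v ^ (-((d : ℝ) + 2) / 2) * Real.exp (-b ^ 2 / (2 * v)) := by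
    rw [← MeasureTheory.integral_Ioc_eq_integral_Ioo, ← intervalIntegral.integral_of_le ht.le,
        ← MeasureTheory.integral_Ioc_eq_integral_Ioo, ← intervalIntegral.integral_of_le ht.le]
    have h := intervalIntegral.integral_comp_sub_left (a := 0) (b := t)
      (fun s => Real.exp (c * s) * (t - s) ^ (-((d : ℝ) + 2) / 2)
        * Real.exp (-b ^ 2 / (2 * (t - s)))) t
    simp only [sub_self, sub_zero] at h
    rw [← h]
    apply intervalIntegral.integral_congr
    intro x hx
    simp [sub_sub_cancel]
  -- assemble
  have hSgt : Real.sqrt (c * t) - b / Real.sqrt (2 * t) = g t := rfl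
  rw [hSgt]
  calc (∫ s in Set.Ioo (0 : ℝ) t,
        Real.exp (c * s) * (t - s) ^ (-((d : ℝ) + 2) / 2) * Real.exp (-b ^ 2 / (2 * (t - s))))
      = ∫ v in Set.Ioo (0:ℝ) t,
          Real.exp (c * (t - v)) * v ^ (-((d : ℝ) + 2) / 2) * Real.exp (-b ^ 2 / (2 * v)) := hrefl
    _ = 2 * Real.exp (c * t - Real.sqrt (2 * c) * b) * ∫ w in Set.Iio (g t), G w := by
        rw [hcov, MeasureTheory.setIntegral_congr_fun measurableSet_Ioo hpt,
          MeasureTheory.integral_const_mul, ← mul_assoc]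
        have h0 : (c*t - Real.sqrt (2*c)*b) + (Real.sqrt (2*c)*b - c*t) = 0 := by ring
        have he := Real.exp_add (c*t - Real.sqrt (2*c)*b) (Real.sqrt (2*c)*b - c*t)
        rw [h0, Real.exp_zero] at he
        have hone : 2 * Real.exp (c * t - Real.sqrt (2*c) * b)
            * (Real.exp (Real.sqrt (2*c) * b - c * t) / 2) = 1 := by linear_combination -he
        rw [hone, one_mul]
end

section
/- For all real numbers a, b with 0 < a ≤ b, lim inf_{t→∞} (1/t) · log(1 − (1 − e^{−bt})^{exp(at)}) ≥ a − b. -/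
open Real Filter

/-- For all reals `0 < a ≤ b`:
`liminf_{t→∞} (1/t) log(1 − (1 − e^{−bt})^{exp(at)}) ≥ a − b`. -/
theorem liminf_log_one_sub_pow (a b : ℝ) (ha : 0 < a) (hab : a ≤ b) :
    a - b ≤ Filter.liminf
      (fun t : ℝ => (1 / t) * Real.log (1 - (1 - Real.exp (-b * t)) ^ Real.exp (a * t)))
      Filter.atTop := by
  set c : ℝ := 1 - Real.exp (-1) with hcdef
  have hc0 : 0 < c := by
    have : Real.exp (-1) < 1 := Real.exp_lt_one_iff.mpr (by norm_num)
    simp only [hcdef]; linarith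
  have hkey : ∀ᶠ t : ℝ in atTop, Real.log c / t + (a - b) ≤
      (1 / t) * Real.log (1 - (1 - Real.exp (-b * t)) ^ Real.exp (a * t)) := by
    filter_upwards [eventually_ge_atTop 1] with t ht
    have ht0 : 0 < t := lt_of_lt_of_le one_pos ht
    have hb0 : 0 < b := lt_of_lt_of_le ha hab
    set u := Real.exp (-b * t) with hu
    have hu0 : 0 < u := Real.exp_pos _
    have hu1 : u < 1 := by
      apply Real.exp_lt_one_iff.mpr; nlinarith
    set N := Real.exp (a * t) with hN
    have hN0 : 0 < N := Real.exp_pos _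
    set x := Real.exp ((a - b) * t) with hx
    have hx0 : 0 < x := Real.exp_pos _
    have hx1 : x ≤ 1 := by
      apply Real.exp_le_one_iff.mpr; nlinarith
    have huN : u * N = x := by
      rw [hu, hN, hx, ← Real.exp_add]; ring_nf
    have hpow : (1 - u) ^ N ≤ Real.exp (-x) := by
      have h1 : (1 : ℝ) - u ≤ Real.exp (-u) := by
        have := Real.add_one_le_exp (-u); linarith
      calc (1 - u) ^ N ≤ (Real.exp (-u)) ^ N :=
            Real.rpow_le_rpow (by linarith) h1 hN0.le
        _ = Real.exp (-u * N) := by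
            rw [Real.rpow_def_of_pos (Real.exp_pos _), Real.log_exp]
        _ = Real.exp (-x) := by rw [← huN]; ring_nf
    have hconv : Real.exp (-x) ≤ 1 - c * x := by
      have h := convexOn_exp.2 (Set.mem_univ (-1 : ℝ)) (Set.mem_univ (0 : ℝ))
        (le_of_lt hx0) (by linarith : (0:ℝ) ≤ 1 - x) (by ring)
      simp only [smul_eq_mul, mul_zero, add_zero, mul_neg, mul_one, Real.exp_zero] at h
      simp only [hcdef]
      nlinarith [h]
    have hcx : c * x ≤ 1 - (1 - u) ^ N := by linarith
    have hcx0 : 0 < c * x := mul_pos hc0 hx0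
    have hlog : Real.log c + (a - b) * t ≤ Real.log (1 - (1 - u) ^ N) := by
      have h := Real.log_le_log hcx0 hcx
      rwa [Real.log_mul hc0.ne' hx0.ne', Real.log_exp] at h
    have h2 : (1 / t) * (Real.log c + (a - b) * t) = Real.log c / t + (a - b) := by
      field_simp
    calc Real.log c / t + (a - b) = (1 / t) * (Real.log c + (a - b) * t) := h2.symm
      _ ≤ (1 / t) * Real.log (1 - (1 - u) ^ N) :=
          mul_le_mul_of_nonneg_left hlog (by positivity)
  have hg : Tendsto (fun t : ℝ => Real.log c / t + (a - b)) atTop (nhds (a - b)) := by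
    have h0 : Tendsto (fun t : ℝ => Real.log c / t) atTop (nhds 0) :=
      tendsto_const_nhds.div_atTop tendsto_id
    simpa using h0.add tendsto_const_nhds
  have hglim : Filter.liminf (fun t : ℝ => Real.log c / t + (a - b)) atTop = a - b :=
    hg.liminf_eq
  rw [← hglim]
  refine Filter.liminf_le_liminf hkey hg.isBoundedUnder_ge ?_
  refine IsBoundedUnder.isCoboundedUnder_ge ⟨0, ?_⟩
  simp only [eventually_map]
  filter_upwards [eventually_ge_atTop 1] with t ht
  have ht0 : 0 < t := lt_of_lt_of_le one_pos ht
  have hb0 : 0 < b := lt_of_lt_of_le ha hab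
  have he1 : Real.exp (-b * t) ≤ 1 := by
    apply Real.exp_le_one_iff.mpr; nlinarith
  have he0 : 0 < Real.exp (-b * t) := Real.exp_pos _
  have hpow0 : (0:ℝ) ≤ (1 - Real.exp (-b * t)) ^ Real.exp (a * t) :=
    Real.rpow_nonneg (by linarith) _
  have hpow1 : (1 - Real.exp (-b * t)) ^ Real.exp (a * t) < 1 :=
    Real.rpow_lt_one (by linarith) (by linarith) (Real.exp_pos _)
  have hlog0 : Real.log (1 - (1 - Real.exp (-b * t)) ^ Real.exp (a * t)) ≤ 0 :=
    Real.log_nonpos (by linarith) (by linarith)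
  exact mul_nonpos_of_nonneg_of_nonpos (by positivity) hlog0
end

section
/- For all reals a > 0, β > 0 and γ > 0, the equation A² − (β − γ)A = βγ(1 − e^{−2aA}) has a solution A > 0 if and only if β > γ/(1 + 2aγ). -/
open Real

lemma exp_neg_le_quad (x : ℝ) (hx : 0 ≤ x) : Real.exp (-x) ≤ 1 - x + x ^ 2 := by
  have h1 : (0:ℝ) < 1 + x := by linarith
  have h2 : x + 1 ≤ Real.exp x := Real.add_one_le_exp x
  have h3 : Real.exp (-x) * Real.exp x = 1 := by
    rw [← Real.exp_add]; simp
  have h4 : Real.exp (-x) * (1 + x) ≤ 1 := by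
    calc Real.exp (-x) * (1 + x) ≤ Real.exp (-x) * Real.exp x := by
          apply mul_le_mul_of_nonneg_left (by linarith) (Real.exp_pos _).le
      _ = 1 := h3
  nlinarith [Real.exp_pos (-x), sq_nonneg x]

lemma one_sub_exp_neg_lt (x : ℝ) (hx : 0 < x) : 1 - Real.exp (-x) < x := by
  have := Real.add_one_lt_exp (x := -x) (by linarith)
  linarith

/-- For all reals `a > 0`, `β > 0`, `γ > 0`, the equation
`A² − (β − γ)A = βγ(1 − e^{−2aA})` has a solution `A > 0` iff `β > γ/(1 + 2aγ)`. -/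
theorem positive_solution_iff (a β γ : ℝ) (ha : 0 < a) (hβ : 0 < β) (hγ : 0 < γ) :
    (∃ A : ℝ, 0 < A ∧ A ^ 2 - (β - γ) * A = β * γ * (1 - Real.exp (-2 * a * A)))
      ↔ γ / (1 + 2 * a * γ) < β := by
  have h1 : (0:ℝ) < 1 + 2 * a * γ := by positivity
  constructor
  · rintro ⟨A, hA, hEq⟩
    by_contra h
    push_neg at h
    have hβγ : β * (1 + 2 * a * γ) ≤ γ := by
      have := (le_div_iff₀ h1).mp h
      linarith
    have hx : 1 - Real.exp (-2 * a * A) < 2 * a * A := by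
      have h2 : -2 * a * A = -(2 * a * A) := by ring
      rw [h2]
      exact one_sub_exp_neg_lt _ (by positivity)
    have h3 : β * γ * (1 - Real.exp (-2 * a * A)) < β * γ * (2 * a * A) :=
      mul_lt_mul_of_pos_left hx (by positivity)
    nlinarith [mul_le_mul_of_nonneg_right hβγ hA.le, sq_nonneg A, mul_pos hA hA]
  · intro h
    have hc : 0 < β * (1 + 2 * a * γ) - γ := by
      rw [div_lt_iff₀ h1] at h
      linarith
    set c := β * (1 + 2 * a * γ) - γ with hcdef
    set D := 1 + 4 * a ^ 2 * β * γ with hDdef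
    have hD : 0 < D := by positivity
    set g : ℝ → ℝ := fun A => A ^ 2 - (β - γ) * A - β * γ * (1 - Real.exp (-2 * a * A))
      with hg
    have hgcont : Continuous g := by fun_prop
    set A₁ := min (c / (2 * D)) 1 with hA₁def
    have hA₁pos : 0 < A₁ := lt_min (by positivity) one_pos
    have hA₁le : A₁ * D ≤ c / 2 := by
      have h4 : A₁ ≤ c / (2 * D) := min_le_left _ _
      calc A₁ * D ≤ (c / (2 * D)) * D := mul_le_mul_of_nonneg_right h4 hD.le
        _ = c / 2 := by field_simp
    have hgA₁ : g A₁ < 0 := by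
      have hexp : Real.exp (-2 * a * A₁) ≤ 1 - 2 * a * A₁ + (2 * a * A₁) ^ 2 := by
        have h2 : -2 * a * A₁ = -(2 * a * A₁) := by ring
        rw [h2]
        exact exp_neg_le_quad _ (by positivity)
      show A₁ ^ 2 - (β - γ) * A₁ - β * γ * (1 - Real.exp (-2 * a * A₁)) < 0
      have hint1 : β * γ * Real.exp (-2 * a * A₁) ≤
          β * γ * (1 - 2 * a * A₁ + (2 * a * A₁) ^ 2) :=
        mul_le_mul_of_nonneg_left hexp (by positivity)
      have hint2 : A₁ * (A₁ * D) ≤ A₁ * (c / 2) :=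
        mul_le_mul_of_nonneg_left hA₁le hA₁pos.le
      have hint3 : 0 < A₁ * c := mul_pos hA₁pos hc
      simp only [hcdef, hDdef] at hint2 hint3
      nlinarith [mul_pos hβ hγ]
    set A₀ := |β - γ| + β * γ + 1 with hA₀def
    have hA₀ : A₀ ≥ β * γ + 1 := by
      have := abs_nonneg (β - γ); linarith
    have hA₀ge : A₀ - (β - γ) ≥ β * γ + 1 := by
      have := le_abs_self (β - γ); linarith
    have hgA₀ : 0 < g A₀ := by
      have hexp : 0 < Real.exp (-2 * a * A₀) := Real.exp_pos _
      have h8 : A₀ * (A₀ - (β - γ)) ≥ (β * γ + 1) * (β * γ + 1) := by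
        apply mul_le_mul hA₀ hA₀ge (by positivity) (by positivity)
      show 0 < A₀ ^ 2 - (β - γ) * A₀ - β * γ * (1 - Real.exp (-2 * a * A₀))
      nlinarith [mul_pos hβ hγ]
    have hA₁A₀ : A₁ ≤ A₀ := by
      have : A₁ ≤ 1 := min_le_right _ _
      have := mul_pos hβ hγ
      linarith
    obtain ⟨A, hAmem, hgA⟩ := intermediate_value_Icc hA₁A₀ hgcont.continuousOn
      (show (0:ℝ) ∈ Set.Icc (g A₁) (g A₀) from ⟨hgA₁.le, hgA₀.le⟩)
    refine ⟨A, lt_of_lt_of_le hA₁pos hAmem.1, ?_⟩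
    have : A ^ 2 - (β - γ) * A - β * γ * (1 - Real.exp (-2 * a * A)) = 0 := hgA
    linarith
end
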